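/- arXiv:1610.04499 — 2 statements merged into one kernel-verified Lean document; each statement's English description precedes it below -/
import Mathlib

section
/- Let n ≥ 2 and let G be a finite simple graph of order n such that every pair of distinct nonadjacent vertices x, y satisfies d(x) + d(y) ≥ n. Then m(G,2) = 2, i.e., there is a set of exactly two vertices from which G 2-percolates. -/
open Finset
open scoped Classical

/-- One step of the `r`-neighbor bootstrap percolation process: all currently
active vertices stay active, and every vertex with at least `r` active
neighbors becomes active. -/
noncomputable def bootStep {V : Type*} [Fintype V] (G : SimpleGraph V) (r : ℕ)
    (A : Finset V) : Finset V :=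
  A ∪ Finset.univ.filter (fun v => r ≤ (G.neighborFinset v ∩ A).card)

/-- The closure of `A` under `r`-neighbor bootstrap percolation, i.e. `⋃ₜ Aₜ`.
Since the process is monotone on a finite vertex set, iterating `|V|` times
reaches the fixed point. -/
noncomputable def bootClosure {V : Type*} [Fintype V] (G : SimpleGraph V) (r : ℕ)
    (A : Finset V) : Finset V :=
  (bootStep G r)^[Fintype.card V] A

/-- `G` `r`-percolates from the initially active set `A`. -/
def Percolates {V : Type*} [Fintype V] (G : SimpleGraph V) (r : ℕ)
    (A : Finset V) : Prop :=
  ∃ t : ℕ, (bootStep G r)^[t] A = Finset.univ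

/-- `m(G, r)`: the minimum size of an `r`-contagious set in `G`. -/
noncomputable def minContagious {V : Type*} [Fintype V] (G : SimpleGraph V) (r : ℕ) : ℕ :=
  sInf {k : ℕ | ∃ A : Finset V, A.card = k ∧ Percolates G r A}

lemma subset_bootStep {V : Type*} [Fintype V] (G : SimpleGraph V) (r : ℕ) (A : Finset V) :
    A ⊆ bootStep G r A :=
  Finset.subset_union_left

/-- The closure is a fixed point of the step map. -/
lemma bootStep_bootClosure {V : Type*} [Fintype V] (G : SimpleGraph V) (r : ℕ) (A : Finset V) :
    bootStep G r (bootClosure G r A) = bootClosure G r A := by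
  classical
  set f := bootStep G r with hf
  have hmono : ∀ s : Finset V, s ⊆ f s := fun s => Finset.subset_union_left
  have key : ∀ t : ℕ, f^[t+1] A = f^[t] A ∨ t + A.card < (f^[t+1] A).card := by
    intro t
    induction t with
    | zero =>
      by_cases h : f A = A
      · left; simpa using h
      · right
        have hss : A ⊂ f A := (hmono A).ssubset_of_ne (Ne.symm h)
        simpa using Finset.card_lt_card hss
    | succ t ih =>
      rcases ih with h | h
      · left
        calc f^[t+1+1] A = f (f^[t+1] A) := Function.iterate_succ_apply' f (t+1) A
          _ = f (f^[t] A) := by rw [h]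
          _ = f^[t+1] A := (Function.iterate_succ_apply' f t A).symm
      · by_cases h2 : f (f^[t+1] A) = f^[t+1] A
        · left; rw [Function.iterate_succ_apply']; exact h2
        · right
          have := Finset.card_lt_card ((hmono (f^[t+1] A)).ssubset_of_ne (Ne.symm h2))
          rw [Function.iterate_succ_apply']
          omega
  rcases key (Fintype.card V) with h | h
  · rw [Function.iterate_succ_apply'] at h
    exact h
  · exfalso
    have h2 : (f^[Fintype.card V + 1] A).card ≤ Fintype.card V := by
      simpa using Finset.card_le_univ (f^[Fintype.card V + 1] A)
    omega

lemma subset_bootClosure {V : Type*} [Fintype V] (G : SimpleGraph V) (r : ℕ) (A : Finset V) :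
    A ⊆ bootClosure G r A := by
  have : ∀ t : ℕ, A ⊆ (bootStep G r)^[t] A := by
    intro t
    induction t with
    | zero => simp
    | succ t ih =>
      rw [Function.iterate_succ_apply']
      exact ih.trans (subset_bootStep G r _)
  exact this _

/-- Main combinatorial lemma: under the Ore condition, any "closed" set which
contains a nonadjacent pair must be everything. -/
lemma closed_eq_univ {V : Type*} [Fintype V] (G : SimpleGraph V)
    (hdeg : ∀ x y : V, x ≠ y → ¬ G.Adj x y → Fintype.card V ≤ G.degree x + G.degree y)
    (A : Finset V) (hclosed : ∀ w, w ∉ A → (G.neighborFinset w ∩ A).card ≤ 1)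
    (u v : V) (hu : u ∈ A) (hv : v ∈ A) (huv : u ≠ v) (hnadj : ¬ G.Adj u v) :
    A = Finset.univ := by
  classical
  by_contra hne
  obtain ⟨b0, hb0⟩ : ∃ b, b ∉ A := by
    by_contra h; push_neg at h; exact hne (Finset.eq_univ_iff_forall.mpr h)
  set k := A.card with hk
  set m := Aᶜ.card with hm
  have hkm : k + m = Fintype.card V := Finset.card_add_card_compl A
  have hm1 : 1 ≤ m := Finset.card_pos.mpr ⟨b0, Finset.mem_compl.mpr hb0⟩
  have hpairsub : ({u, v} : Finset V) ⊆ A := by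
    intro w hw
    rcases Finset.mem_insert.mp hw with h | h
    · exact h ▸ hu
    · exact (Finset.mem_singleton.mp h) ▸ hv
  have hcpair : ({u, v} : Finset V).card = 2 := Finset.card_pair huv
  set c := (A \ {u, v}).card with hc
  have hck : c + 2 = k := by
    rw [hc, hk, ← hcpair]
    exact Finset.card_sdiff_add_card_eq_card hpairsub
  -- degree decomposition
  have hdegsplit : ∀ x : V, G.degree x =
      (G.neighborFinset x ∩ A).card + (G.neighborFinset x ∩ Aᶜ).card := by
    intro x
    have h1 : G.neighborFinset x ∩ Aᶜ = G.neighborFinset x \ A := by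
      ext w; simp [Finset.mem_sdiff, Finset.mem_inter]
    rw [h1, ← SimpleGraph.card_neighborFinset_eq_degree]
    exact (Finset.card_inter_add_card_sdiff _ _).symm
  -- neighborhoods of u and v inside A avoid {u, v}
  have hsub : ∀ x y : V, ¬G.Adj x y →
      G.neighborFinset x ∩ A ⊆ A \ {x, y} := by
    intro x y hxyadj w hw
    rw [Finset.mem_inter, SimpleGraph.mem_neighborFinset] at hw
    rw [Finset.mem_sdiff]
    refine ⟨hw.2, ?_⟩
    simp only [Finset.mem_insert, Finset.mem_singleton]
    push_neg
    constructor
    · rintro rfl; exact G.irrefl hw.1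
    · rintro rfl; exact hxyadj hw.1
  have hsubu : G.neighborFinset u ∩ A ⊆ A \ {u, v} := hsub u v hnadj
  have hsubv : G.neighborFinset v ∩ A ⊆ A \ {u, v} := by
    have h2 := hsub v u (fun h => hnadj (G.adj_symm h))
    intro w hw
    have h3 := h2 hw
    rw [Finset.mem_sdiff] at h3 ⊢
    refine ⟨h3.1, ?_⟩
    simp only [Finset.mem_insert, Finset.mem_singleton] at h3 ⊢
    tauto
  -- degrees outside A are at most m
  have hdb : ∀ b, b ∉ A → G.degree b ≤ m := by
    intro b hb
    have h1 : (G.neighborFinset b ∩ A).card ≤ 1 := hclosed b hb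
    have h2 : G.neighborFinset b ∩ Aᶜ ⊆ Aᶜ.erase b := by
      intro w hw
      rw [Finset.mem_inter] at hw
      refine Finset.mem_erase.mpr ⟨?_, hw.2⟩
      rintro rfl
      exact G.irrefl ((G.mem_neighborFinset _ _).mp hw.1)
    have h3 : (Aᶜ.erase b).card + 1 = m := Finset.card_erase_add_one (Finset.mem_compl.mpr hb)
    have h4 := Finset.card_le_card h2
    have h5 := hdegsplit b
    omega
  -- double counting: the number of edges from A to its complement is at most m
  have hinterfilter : ∀ (x : V) (t : Finset V),
      G.neighborFinset x ∩ t = t.filter (fun b => G.Adj x b) := by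
    intro x t; ext b
    simp [Finset.mem_inter, Finset.mem_filter, SimpleGraph.mem_neighborFinset, and_comm]
  have hS2 : ∑ a ∈ A, (G.neighborFinset a ∩ Aᶜ).card ≤ m := by
    calc ∑ a ∈ A, (G.neighborFinset a ∩ Aᶜ).card
        = ∑ a ∈ A, ∑ b ∈ Aᶜ, (if G.Adj a b then 1 else 0) := by
          refine Finset.sum_congr rfl fun a _ => ?_
          rw [hinterfilter, Finset.card_filter]
      _ = ∑ b ∈ Aᶜ, ∑ a ∈ A, (if G.Adj a b then 1 else 0) := Finset.sum_comm
      _ = ∑ b ∈ Aᶜ, (G.neighborFinset b ∩ A).card := by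
          refine Finset.sum_congr rfl fun b _ => ?_
          rw [hinterfilter, Finset.card_filter]
          refine Finset.sum_congr rfl fun a _ => ?_
          simp [G.adj_comm]
      _ ≤ ∑ _b ∈ Aᶜ, 1 :=
          Finset.sum_le_sum fun b hb => hclosed b (Finset.mem_compl.mp hb)
      _ = m := by rw [Finset.sum_const, smul_eq_mul, mul_one]
  by_cases hstar : ∃ a ∈ A, ∀ b, b ∉ A → G.Adj a b
  · -- some vertex of A is adjacent to everything outside A: impossible
    obtain ⟨astar, haA, hadj⟩ := hstar
    obtain ⟨u', hu'A, hu'ne, hu'sub⟩ :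
        ∃ u', u' ∈ A ∧ u' ≠ astar ∧ G.neighborFinset u' ∩ A ⊆ A \ {u, v} := by
      by_cases h : u = astar
      · refine ⟨v, hv, ?_, hsubv⟩
        rintro rfl; exact huv h
      · exact ⟨u, hu, h, hsubu⟩
    have hNsub : G.neighborFinset u' ⊆ A \ {u, v} := by
      intro w hw
      have hwA : w ∈ A := by
        by_contra hwA
        have h1 := hclosed w hwA
        have h2 : ({astar, u'} : Finset V) ⊆ G.neighborFinset w ∩ A := by
          intro z hz
          rcases Finset.mem_insert.mp hz with rfl | hz
          · exact Finset.mem_inter.mpr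
              ⟨(G.mem_neighborFinset _ _).mpr (G.adj_symm (hadj w hwA)), haA⟩
          · rw [Finset.mem_singleton] at hz
            subst hz
            exact Finset.mem_inter.mpr
              ⟨(G.mem_neighborFinset _ _).mpr
                (G.adj_symm ((G.mem_neighborFinset _ _).mp hw)), hu'A⟩
        have h3 := Finset.card_le_card h2
        rw [Finset.card_pair (fun h => hu'ne h.symm)] at h3
        omega
      exact hu'sub (Finset.mem_inter.mpr ⟨hw, hwA⟩)
    have hdu' : G.degree u' ≤ c := by
      rw [← SimpleGraph.card_neighborFinset_eq_degree]
      exact Finset.card_le_card hNsub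
    have hb0adj : ¬ G.Adj u' b0 := by
      intro h
      exact hb0 (Finset.mem_sdiff.mp (hNsub ((G.mem_neighborFinset _ _).mpr h))).1
    have hb0ne : u' ≠ b0 := by rintro rfl; exact hb0 hu'A
    have hore := hdeg u' b0 hb0ne hb0adj
    have hdb0 := hdb b0 hb0
    omega
  · -- every vertex of A misses someone outside A
    push_neg at hstar
    have hdegA : ∀ a ∈ A, Fintype.card V ≤ G.degree a + m := by
      intro a ha
      obtain ⟨b, hbA, hab⟩ := hstar a ha
      have hne' : a ≠ b := by rintro rfl; exact hbA ha
      have h1 := hdeg a b hne' hab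
      have h2 := hdb b hbA
      omega
    -- lower bound on the total degree over A
    have hsplitsum : ∑ a ∈ A \ {u, v}, G.degree a + ∑ a ∈ ({u, v} : Finset V), G.degree a
        = ∑ a ∈ A, G.degree a := Finset.sum_sdiff hpairsub
    have hsumpair : ∑ a ∈ ({u, v} : Finset V), G.degree a = G.degree u + G.degree v :=
      Finset.sum_pair huv
    have hLB1 : Fintype.card V ≤ G.degree u + G.degree v := hdeg u v huv hnadj
    have hLB2 : c * Fintype.card V ≤ (∑ a ∈ A \ {u, v}, G.degree a) + c * m := by
      calc c * Fintype.card V = ∑ _a ∈ A \ {u, v}, Fintype.card V := by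
            rw [Finset.sum_const, smul_eq_mul]
        _ ≤ ∑ a ∈ A \ {u, v}, (G.degree a + m) :=
            Finset.sum_le_sum fun a ha => hdegA a (Finset.mem_sdiff.mp ha).1
        _ = (∑ a ∈ A \ {u, v}, G.degree a) + c * m := by
            rw [Finset.sum_add_distrib, Finset.sum_const, smul_eq_mul]
    have hdegsum : ∑ a ∈ A, G.degree a
        = (∑ a ∈ A, (G.neighborFinset a ∩ A).card)
          + ∑ a ∈ A, (G.neighborFinset a ∩ Aᶜ).card := by
      rw [← Finset.sum_add_distrib]
      exact Finset.sum_congr rfl fun a _ => hdegsplit a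
    -- upper bound on the A-internal degree sum
    have hdAu : (G.neighborFinset u ∩ A).card ≤ c := Finset.card_le_card hsubu
    have hdAv : (G.neighborFinset v ∩ A).card ≤ c := Finset.card_le_card hsubv
    have hdAa : ∀ a ∈ A \ {u, v}, (G.neighborFinset a ∩ A).card ≤ c + 1 := by
      intro a ha
      have haA := (Finset.mem_sdiff.mp ha).1
      have hsub2 : G.neighborFinset a ∩ A ⊆ A.erase a := by
        intro w hw
        rw [Finset.mem_inter] at hw
        refine Finset.mem_erase.mpr ⟨?_, hw.2⟩
        rintro rfl
        exact G.irrefl ((G.mem_neighborFinset _ _).mp hw.1)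
      have h3 : (A.erase a).card + 1 = k := Finset.card_erase_add_one haA
      have h4 := Finset.card_le_card hsub2
      omega
    have hS1 : ∑ a ∈ A, (G.neighborFinset a ∩ A).card ≤ (c + c) + c * (c + 1) := by
      have hsplit2 : ∑ a ∈ A \ {u, v}, (G.neighborFinset a ∩ A).card
          + ∑ a ∈ ({u, v} : Finset V), (G.neighborFinset a ∩ A).card
          = ∑ a ∈ A, (G.neighborFinset a ∩ A).card := Finset.sum_sdiff hpairsub
      have h1 : ∑ a ∈ ({u, v} : Finset V), (G.neighborFinset a ∩ A).card
          = (G.neighborFinset u ∩ A).card + (G.neighborFinset v ∩ A).card :=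
        Finset.sum_pair huv
      have h2 : ∑ a ∈ A \ {u, v}, (G.neighborFinset a ∩ A).card ≤ c * (c + 1) := by
        calc ∑ a ∈ A \ {u, v}, (G.neighborFinset a ∩ A).card
            ≤ ∑ _a ∈ A \ {u, v}, (c + 1) := Finset.sum_le_sum hdAa
          _ = c * (c + 1) := by rw [Finset.sum_const, smul_eq_mul]
      omega
    -- assemble the contradiction
    have e1 : c * Fintype.card V = c * c + 2 * c + c * m := by
      have hcv : Fintype.card V = c + 2 + m := by omega
      rw [hcv]; ring
    have e2 : c * (c + 1) = c * c + c := by ring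
    linarith

/-- Ore-type condition: if `n ≥ 2` and every pair of distinct nonadjacent
vertices has degree sum at least `n`, then `m(G, 2) = 2`. -/
theorem stmt0 {V : Type*} [Fintype V] (G : SimpleGraph V)
    (hn : 2 ≤ Fintype.card V)
    (hdeg : ∀ x y : V, x ≠ y → ¬ G.Adj x y →
      Fintype.card V ≤ G.degree x + G.degree y) :
    minContagious G 2 = 2 := by
  classical
  have hpair : ∃ A : Finset V, A.card = 2 ∧ Percolates G 2 A := by
    by_cases hcomp : ∀ x y : V, x ≠ y → G.Adj x y
    · -- complete graph: any pair percolates in one step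
      obtain ⟨u, v, huv⟩ := Fintype.exists_pair_of_one_lt_card (by omega : 1 < Fintype.card V)
      refine ⟨{u, v}, Finset.card_pair huv, 1, ?_⟩
      rw [Function.iterate_one]
      refine Finset.eq_univ_iff_forall.mpr fun w => ?_
      unfold bootStep
      rw [Finset.mem_union]
      by_cases hw : w ∈ ({u, v} : Finset V)
      · exact Or.inl hw
      · right
        rw [Finset.mem_filter]
        refine ⟨Finset.mem_univ w, ?_⟩
        have hsub : ({u, v} : Finset V) ⊆ G.neighborFinset w ∩ {u, v} := by
          intro z hz
          refine Finset.mem_inter.mpr ⟨(G.mem_neighborFinset _ _).mpr ?_, hz⟩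
          have hne : w ≠ z := by rintro rfl; exact hw hz
          exact hcomp w z hne
        have h2 := Finset.card_le_card hsub
        rw [Finset.card_pair huv] at h2
        exact h2
    · -- there is a nonadjacent pair: its closure percolates
      push_neg at hcomp
      obtain ⟨u, v, huv, hnadj⟩ := hcomp
      refine ⟨{u, v}, Finset.card_pair huv, Fintype.card V, ?_⟩
      have hclosed : ∀ w, w ∉ bootClosure G 2 {u, v} →
          (G.neighborFinset w ∩ bootClosure G 2 {u, v}).card ≤ 1 := by
        intro w hwmem
        by_contra hcard
        push_neg at hcard
        apply hwmem
        have hfix := bootStep_bootClosure G 2 {u, v}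
        rw [← hfix]
        unfold bootStep
        rw [Finset.mem_union, Finset.mem_filter]
        exact Or.inr ⟨Finset.mem_univ w, hcard⟩
      exact closed_eq_univ G hdeg _ hclosed u v
        (subset_bootClosure G 2 _ (by simp)) (subset_bootClosure G 2 _ (by simp)) huv hnadj
  obtain ⟨A2, hA2card, hA2perc⟩ := hpair
  have h2mem : 2 ∈ {k : ℕ | ∃ A : Finset V, A.card = k ∧ Percolates G 2 A} :=
    ⟨A2, hA2card, hA2perc⟩
  refine le_antisymm (Nat.sInf_le h2mem) (le_csInf ⟨2, h2mem⟩ ?_)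
  rintro b ⟨A, hcard, t, hperc⟩
  by_contra hb
  push_neg at hb
  have hA1 : A.card ≤ 1 := by omega
  have hfix : bootStep G 2 A = A := by
    unfold bootStep
    have hfil : (Finset.univ.filter fun w => 2 ≤ (G.neighborFinset w ∩ A).card) = ∅ := by
      refine Finset.filter_eq_empty_iff.mpr fun w _ => ?_
      have h1 : (G.neighborFinset w ∩ A).card ≤ A.card :=
        Finset.card_le_card Finset.inter_subset_right
      omega
    rw [hfil, Finset.union_empty]
  rw [Function.iterate_fixed hfix] at hperc
  have hcards : A.card = Fintype.card V := by rw [hperc, Finset.card_univ]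
  omega
end

section
/- Let G be a finite simple graph of order n ≥ 2 such that every pair of distinct nonadjacent vertices x, y satisfies d(x) + d(y) ≥ n − 1. If G is not isomorphic to the 5-cycle C₅, then m(G,2) = 2. -/
open Finset
open scoped Classical

section Infra
variable {V : Type*} [Fintype V] (G : SimpleGraph V)

noncomputable def stepIn (S A : Finset V) : Finset V :=
  A ∪ S.filter (fun v => 2 ≤ ((G.neighborFinset v ∩ S) ∩ A).card)

noncomputable def clIn (S A : Finset V) : Finset V := (stepIn G S)^[Fintype.card V] A

variable {G}

lemma subset_stepIn (S A : Finset V) : A ⊆ stepIn G S A := subset_union_left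

lemma stepIn_mono {S S' A A' : Finset V} (hS : S ⊆ S') (hA : A ⊆ A') :
    stepIn G S A ⊆ stepIn G S' A' := by
  apply union_subset_union hA
  intro v hv
  rw [mem_filter] at hv ⊢
  refine ⟨hS hv.1, le_trans hv.2 (card_le_card ?_)⟩
  exact inter_subset_inter (inter_subset_inter le_rfl hS) hA

lemma stepIn_subset {S A : Finset V} (h : A ⊆ S) : stepIn G S A ⊆ S :=
  union_subset h (filter_subset _ _)

lemma subset_iterate_stepIn (S A : Finset V) (t : ℕ) : A ⊆ (stepIn G S)^[t] A := by
  induction t with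
  | zero => simp
  | succ n ih =>
    rw [Function.iterate_succ_apply']
    exact ih.trans (subset_stepIn _ _)

lemma subset_clIn (S A : Finset V) : A ⊆ clIn G S A := subset_iterate_stepIn S A _

lemma iterate_stepIn_subset {S A : Finset V} (h : A ⊆ S) (t : ℕ) : (stepIn G S)^[t] A ⊆ S := by
  induction t with
  | zero => simpa
  | succ n ih =>
    rw [Function.iterate_succ_apply']
    exact stepIn_subset ih

lemma clIn_subset {S A : Finset V} (h : A ⊆ S) : clIn G S A ⊆ S := iterate_stepIn_subset h _

private lemma exists_fix (f : Finset V → Finset V) (hf : ∀ X, X ⊆ f X) (A : Finset V) :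
    ∃ t ≤ Fintype.card V, f ((f^[t]) A) = (f^[t]) A := by
  by_contra hcon
  push_neg at hcon
  have key : ∀ t, t ≤ Fintype.card V + 1 → t ≤ ((f^[t]) A).card := by
    intro t ht
    induction t with
    | zero => simp
    | succ n ih =>
      have hn : n ≤ Fintype.card V := by omega
      have h1 : (f^[n]) A ⊂ f ((f^[n]) A) :=
        (ssubset_iff_of_subset (hf _)).2 (by
          rcases not_subset.1 (fun hsub => hcon n hn (le_antisymm hsub (hf _))) with ⟨x, hx1, hx2⟩
          exact ⟨x, hx1, hx2⟩)
      have := card_lt_card h1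
      rw [Function.iterate_succ_apply']
      have := ih (by omega)
      omega
  have := key (Fintype.card V + 1) le_rfl
  have hle : ((f^[Fintype.card V + 1]) A).card ≤ Fintype.card V := by
    simpa using card_le_card (subset_univ ((f^[Fintype.card V + 1]) A))
  omega

lemma clIn_fixed (S A : Finset V) : stepIn G S (clIn G S A) = clIn G S A := by
  obtain ⟨t, ht, hfix⟩ := exists_fix (stepIn G S) (fun X => subset_stepIn S X) A
  have stab : ∀ s, (stepIn G S)^[t + s] A = (stepIn G S)^[t] A := by
    intro s
    induction s with
    | zero => rfl
    | succ n ih =>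
      have : t + (n+1) = (t+n) + 1 := by omega
      rw [this, Function.iterate_succ_apply', ih, hfix]
  have h1 : clIn G S A = (stepIn G S)^[t] A := by
    have := stab (Fintype.card V - t)
    have ht' : t + (Fintype.card V - t) = Fintype.card V := by omega
    rw [ht'] at this
    exact this
  rw [h1, hfix]

lemma mem_clIn_of_two {S A : Finset V} {v : V} (hv : v ∈ S)
    (h : 2 ≤ ((G.neighborFinset v ∩ S) ∩ clIn G S A).card) : v ∈ clIn G S A := by
  have : v ∈ stepIn G S (clIn G S A) := mem_union_right _ (mem_filter.2 ⟨hv, h⟩)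
  rwa [clIn_fixed] at this

/-- workhorse: a vertex of `S` with two distinct active neighbours becomes active. -/
lemma two_mem {S A : Finset V} {v x y : V} (hA : A ⊆ S) (hv : v ∈ S)
    (hx : x ∈ clIn G S A) (hy : y ∈ clIn G S A) (hxy : x ≠ y)
    (hvx : G.Adj v x) (hvy : G.Adj v y) : v ∈ clIn G S A := by
  apply mem_clIn_of_two hv
  have hsub : ({x, y} : Finset V) ⊆ (G.neighborFinset v ∩ S) ∩ clIn G S A := by
    intro t ht
    rcases mem_insert.1 ht with rfl | ht
    · exact mem_inter.2 ⟨mem_inter.2 ⟨(G.mem_neighborFinset v t).2 hvx, clIn_subset hA hx⟩, hx⟩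
    · rcases mem_singleton.1 ht with rfl
      exact mem_inter.2 ⟨mem_inter.2 ⟨(G.mem_neighborFinset v t).2 hvy, clIn_subset hA hy⟩, hy⟩
  calc (2:ℕ) = ({x,y} : Finset V).card := (card_pair hxy).symm
    _ ≤ _ := card_le_card hsub

lemma clIn_mono {S S' A A' : Finset V} (hS : S ⊆ S') (hA : A ⊆ A') :
    clIn G S A ⊆ clIn G S' A' := by
  unfold clIn
  induction (Fintype.card V) with
  | zero => simpa
  | succ n ih =>
    rw [Function.iterate_succ_apply', Function.iterate_succ_apply']
    exact stepIn_mono hS ih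

lemma percolates_of_clIn_univ {A : Finset V} (h : clIn G univ A = univ) :
    Percolates G 2 A := by
  refine ⟨Fintype.card V, ?_⟩
  have hfun : stepIn G univ = bootStep G 2 := by
    funext X
    simp [stepIn, bootStep, inter_univ]
  rw [← hfun]
  exact h

/-- partition of S-degree -/
lemma dS_split {S B : Finset V} (hB : B ⊆ S) (v : V) :
    (G.neighborFinset v ∩ S).card
      = (G.neighborFinset v ∩ B).card + (G.neighborFinset v ∩ (S \ B)).card := by
  rw [← card_union_of_disjoint, ← inter_union_distrib_left, union_sdiff_of_subset hB]
  exact disjoint_left.2 fun a ha hb =>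
    (mem_sdiff.1 (mem_inter.1 hb).2).2 (mem_inter.1 ha).2

lemma double_count (B C : Finset V) :
    ∑ b ∈ B, (G.neighborFinset b ∩ C).card = ∑ c ∈ C, (G.neighborFinset c ∩ B).card := by
  have h : ∀ (X Y : Finset V) (v : V), (G.neighborFinset v ∩ X) = X.filter (G.Adj v) := by
    intro X Y v
    ext t
    simp only [mem_inter, mem_filter, SimpleGraph.mem_neighborFinset]
    tauto
  calc ∑ b ∈ B, (G.neighborFinset b ∩ C).card
      = ∑ b ∈ B, ∑ c ∈ C, if G.Adj b c then 1 else 0 := by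
        refine Finset.sum_congr rfl fun b _ => ?_
        rw [h C B b, card_filter]
    _ = ∑ c ∈ C, ∑ b ∈ B, if G.Adj b c then 1 else 0 := Finset.sum_comm
    _ = ∑ c ∈ C, (G.neighborFinset c ∩ B).card := by
        refine Finset.sum_congr rfl fun c _ => ?_
        rw [h B C c, card_filter]
        refine Finset.sum_congr rfl fun b _ => ?_
        simp [G.adj_comm]

end Infra

section DD
variable {V : Type*} [Fintype V] (G : SimpleGraph V)

/-- degree of `v` into the set `S` -/
noncomputable def dd (S : Finset V) (v : V) : ℕ := (G.neighborFinset v ∩ S).card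

variable {G}

lemma dd_split {S B : Finset V} (hB : B ⊆ S) (v : V) :
    dd G S v = dd G B v + dd G (S \ B) v := dS_split hB v

lemma dd_le_card (S : Finset V) (v : V) : dd G S v ≤ S.card :=
  card_le_card inter_subset_right

lemma nbr_inter_subset_erase {S : Finset V} {v : V} : G.neighborFinset v ∩ S ⊆ S.erase v := by
  intro t ht
  rcases mem_inter.1 ht with ⟨h1, h2⟩
  refine mem_erase.2 ⟨?_, h2⟩
  rintro rfl
  exact G.irrefl ((G.mem_neighborFinset _ _).1 h1)

lemma dd_add_one_le {S : Finset V} {v : V} (hv : v ∈ S) : dd G S v + 1 ≤ S.card := by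
  have h := card_le_card (nbr_inter_subset_erase (G := G) (S := S) (v := v))
  rw [card_erase_of_mem hv] at h
  have : 1 ≤ S.card := card_pos.2 ⟨v, hv⟩
  unfold dd; omega

lemma adj_all_of_dd {S : Finset V} {v : V} (hv : v ∈ S) (h : S.card ≤ dd G S v + 1) :
    ∀ y ∈ S, y ≠ v → G.Adj v y := by
  have hsub : G.neighborFinset v ∩ S ⊆ S.erase v := nbr_inter_subset_erase
  have hcard : (S.erase v).card ≤ (G.neighborFinset v ∩ S).card := by
    rw [card_erase_of_mem hv]
    unfold dd at h
    omega
  have heq := eq_of_subset_of_card_le hsub hcard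
  intro y hy hyv
  have : y ∈ G.neighborFinset v ∩ S := by rw [heq]; exact mem_erase.2 ⟨hyv, hy⟩
  exact (G.mem_neighborFinset v y).1 (mem_inter.1 this).1

lemma unique_nbr {B : Finset V} {c b b' : V} (h : dd G B c ≤ 1)
    (h1 : G.Adj c b) (hb : b ∈ B) (h2 : G.Adj c b') (hb' : b' ∈ B) : b = b' := by
  have m1 : b ∈ G.neighborFinset c ∩ B := mem_inter.2 ⟨(G.mem_neighborFinset c b).2 h1, hb⟩
  have m2 : b' ∈ G.neighborFinset c ∩ B := mem_inter.2 ⟨(G.mem_neighborFinset c b').2 h2, hb'⟩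
  exact card_le_one.1 h b m1 b' m2

lemma exists_nonadj {B : Finset V} {v : V} (h : dd G B v < B.card) :
    ∃ b ∈ B, ¬ G.Adj v b := by
  have : ¬ B ⊆ G.neighborFinset v ∩ B := fun hsub => by
    have := card_le_card hsub
    unfold dd at h; omega
  rcases not_subset.1 this with ⟨b, hb, hnb⟩
  refine ⟨b, hb, fun hadj => hnb (mem_inter.2 ⟨(G.mem_neighborFinset v b).2 hadj, hb⟩)⟩

lemma mem_nbr_of_dd_pos {B : Finset V} {v : V} (h : 1 ≤ dd G B v) :
    ∃ b ∈ B, G.Adj v b := by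
  have : (G.neighborFinset v ∩ B).Nonempty := card_pos.1 h
  rcases this with ⟨b, hb⟩
  exact ⟨b, (mem_inter.1 hb).2, (G.mem_neighborFinset v b).1 (mem_inter.1 hb).1⟩

lemma dd_double_count (B C : Finset V) :
    ∑ b ∈ B, dd G C b = ∑ c ∈ C, dd G B c := double_count B C

lemma adj_of_dC_pos {C : Finset V} {b c : V} (hc : c ∈ G.neighborFinset b ∩ C) :
    G.Adj b c := (G.mem_neighborFinset b c).1 (mem_inter.1 hc).1

lemma nbr_eq_singleton {B : Finset V} {c b : V} (h : dd G B c = 1)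
    (h1 : G.Adj c b) (hb : b ∈ B) : G.neighborFinset c ∩ B = {b} := by
  have m1 : b ∈ G.neighborFinset c ∩ B := mem_inter.2 ⟨(G.mem_neighborFinset c b).2 h1, hb⟩
  rcases card_eq_one.1 h with ⟨x, hx⟩
  rw [hx] at m1 ⊢
  rw [mem_singleton.1 m1]

end DD

theorem lemmaM {V : Type*} [Fintype V] (G : SimpleGraph V) :
    ∀ N : ℕ, 2 ≤ N → ∀ S : Finset V, S.card = N →
    (∀ x ∈ S, ∀ y ∈ S, x ≠ y → ¬ G.Adj x y → N ≤ dd G S x + dd G S y + 1) →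
    (¬ (N = 5 ∧ ∀ x ∈ S, dd G S x = 2)) →
    ∃ A ⊆ S, A.card = 2 ∧ clIn G S A = S := by
  intro N
  induction N using Nat.strong_induction_on with
  | _ N IH =>
  intro hN2 S hScard hOre hC5
  rcases eq_or_lt_of_le hN2 with h2 | hN3
  · exact ⟨S, Subset.rfl, by omega,
      le_antisymm (clIn_subset Subset.rfl) (subset_clIn S S)⟩
  have hN3' : 3 ≤ N := hN3
  -- Step 1 : some vertex has S-degree ≥ 2
  have hw : ∃ w ∈ S, 2 ≤ dd G S w := by
    by_contra hcon
    push_neg at hcon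
    rcases Nat.lt_or_ge N 4 with hN4 | hN4
    · -- N = 3
      have hN3e : N = 3 := by omega
      obtain ⟨a, ha⟩ : S.Nonempty := card_pos.1 (by omega)
      have hda : dd G S a ≤ 1 := by have := hcon a ha; omega
      have hda1 : dd G S a = 1 := by
        by_contra hda0
        have hda0 : dd G S a = 0 := by omega
        obtain ⟨b, hbS, hba⟩ : ∃ b ∈ S, b ≠ a := by
          obtain ⟨x, hx, y, hy, hxy⟩ := one_lt_card.1 (show 1 < S.card by omega)
          rcases eq_or_ne x a with rfl | hxa
          · exact ⟨y, hy, hxy.symm⟩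
          · exact ⟨x, hx, hxa⟩
        have hnadj : ¬ G.Adj a b := by
          intro h
          have : b ∈ G.neighborFinset a ∩ S := mem_inter.2 ⟨(G.mem_neighborFinset a b).2 h, hbS⟩
          have : 1 ≤ dd G S a := card_pos.2 ⟨b, this⟩
          omega
        have := hOre a ha b hbS hba.symm hnadj
        have := hcon b hbS
        omega
      obtain ⟨t, htadj, htS⟩ : ∃ t, G.Adj a t ∧ t ∈ S := by
        obtain ⟨t, ht, hadj⟩ := mem_nbr_of_dd_pos (B := S) (v := a) (le_of_eq hda1.symm)
        exact ⟨t, hadj, ht⟩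
      have hta : t ≠ a := htadj.ne'
      obtain ⟨u, hu⟩ : (S \ {a, t}).Nonempty := by
        apply card_pos.1
        have h1 : ({a, t} : Finset V).card = 2 := card_pair (Ne.symm hta)
        have h2 : ({a, t} : Finset V) ⊆ S := by
          intro z hz; rcases mem_insert.1 hz with rfl | hz
          · exact ha
          · rw [mem_singleton.1 hz]; exact htS
        have := card_sdiff_add_card_eq_card h2
        omega
      have huS : u ∈ S := (mem_sdiff.1 hu).1
      have hua : u ≠ a := fun h => (mem_sdiff.1 hu).2 (by rw [h]; exact mem_insert_self _ _)
      have hut : u ≠ t := fun h => (mem_sdiff.1 hu).2 (by rw [h]; exact mem_insert_of_mem (mem_singleton_self _))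
      have hnua : ¬ G.Adj u a := by
        intro h
        have h1 : a ∈ G.neighborFinset u ∩ S := mem_inter.2 ⟨(G.mem_neighborFinset u a).2 h, ha⟩
        have hSa : G.neighborFinset a ∩ S = {t} :=
          nbr_eq_singleton hda1 htadj htS
        have : u ∈ G.neighborFinset a ∩ S := mem_inter.2 ⟨(G.mem_neighborFinset a u).2 h.symm, huS⟩
        rw [hSa] at this
        exact hut (mem_singleton.1 this)
      have hnut : ¬ G.Adj u t := by
        intro h
        have h1 : u ∈ G.neighborFinset t ∩ S := mem_inter.2 ⟨(G.mem_neighborFinset t u).2 h.symm, huS⟩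
        have h2 : a ∈ G.neighborFinset t ∩ S := mem_inter.2 ⟨(G.mem_neighborFinset t a).2 htadj.symm, ha⟩
        have : 2 ≤ dd G S t := by
          have hsub : ({u, a} : Finset V) ⊆ G.neighborFinset t ∩ S := by
            intro z hz; rcases mem_insert.1 hz with rfl | hz
            · exact h1
            · rw [mem_singleton.1 hz]; exact h2
          calc (2:ℕ) = ({u,a} : Finset V).card := (card_pair hua).symm
            _ ≤ _ := card_le_card hsub
        have := hcon t htS
        omega
      have hSeq : ({a, t, u} : Finset V) = S := by
        apply eq_of_subset_of_card_le
        · intro z hz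
          rcases mem_insert.1 hz with rfl | hz
          · exact ha
          rcases mem_insert.1 hz with rfl | hz
          · exact htS
          · rw [mem_singleton.1 hz]; exact huS
        · rw [card_eq_three.2 ⟨a, t, u, Ne.symm hta, Ne.symm hua, Ne.symm hut, rfl⟩]
          omega
      have hdu0 : dd G S u = 0 := by
        rw [dd, card_eq_zero]
        apply eq_empty_of_forall_notMem
        intro z hz
        rcases mem_inter.1 hz with ⟨hz1, hz2⟩
        have hadjz : G.Adj u z := (G.mem_neighborFinset u z).1 hz1
        rw [← hSeq] at hz2
        rcases mem_insert.1 hz2 with rfl | hz2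
        · exact hnua hadjz
        rcases mem_insert.1 hz2 with rfl | hz2
        · exact hnut hadjz
        · rw [mem_singleton.1 hz2] at hadjz; exact G.irrefl hadjz
      have h1 := hOre u huS a ha hua hnua
      omega
    · -- N ≥ 4
      obtain ⟨a, ha⟩ : S.Nonempty := card_pos.1 (by omega)
      obtain ⟨b, hb⟩ : (S \ insert a (G.neighborFinset a)).Nonempty := by
        apply card_pos.1
        have h1 : (S ∩ insert a (G.neighborFinset a)).card ≤ 2 := by
          have hsub : S ∩ insert a (G.neighborFinset a) ⊆ insert a (G.neighborFinset a ∩ S) := by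
            intro z hz
            rcases mem_inter.1 hz with ⟨hzS, hzi⟩
            rcases mem_insert.1 hzi with rfl | hzn
            · exact mem_insert_self _ _
            · exact mem_insert_of_mem (mem_inter.2 ⟨hzn, hzS⟩)
          have := card_le_card hsub
          have h2 := card_insert_le a (G.neighborFinset a ∩ S)
          have := hcon a ha
          unfold dd at this
          omega
        have h3 := card_sdiff_add_card_inter S (insert a (G.neighborFinset a))
        omega
      have hbS : b ∈ S := (mem_sdiff.1 hb).1
      have hba : b ≠ a := fun h => (mem_sdiff.1 hb).2 (by rw [h]; exact mem_insert_self _ _)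
      have hnab : ¬ G.Adj b a := by
        intro h
        exact (mem_sdiff.1 hb).2 (mem_insert_of_mem ((G.mem_neighborFinset a b).2 h.symm))
      have h1 := hOre b hbS a ha hba hnab
      have h2 := hcon b hbS
      have h3 := hcon a ha
      omega
  obtain ⟨w, hwS, hw2⟩ := hw
  obtain ⟨x, hx, y, hy, hxy⟩ := one_lt_card.1 (show 1 < (G.neighborFinset w ∩ S).card from by
    unfold dd at hw2; omega)
  have hxS : x ∈ S := (mem_inter.1 hx).2
  have hyS : y ∈ S := (mem_inter.1 hy).2
  have hadjwx : G.Adj w x := (G.mem_neighborFinset w x).1 (mem_inter.1 hx).1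
  have hadjwy : G.Adj w y := (G.mem_neighborFinset w y).1 (mem_inter.1 hy).1
  have hxyS : ({x, y} : Finset V) ⊆ S := by
    intro z hz; rcases mem_insert.1 hz with rfl | hz
    · exact hxS
    · rw [mem_singleton.1 hz]; exact hyS
  -- the maximal pair-closure B
  have hPne : (S.powersetCard 2).Nonempty := by
    obtain ⟨t, htS, ht2⟩ := Finset.exists_subset_card_eq (show 2 ≤ S.card by omega)
    exact ⟨t, mem_powersetCard.2 ⟨htS, ht2⟩⟩
  obtain ⟨p, hpP, hpmax⟩ := Finset.exists_max_image (S.powersetCard 2)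
    (fun A => (clIn G S A).card) hPne
  obtain ⟨hpS, hpcard⟩ := mem_powersetCard.1 hpP
  set B := clIn G S p with hBdef
  have hBS : B ⊆ S := clIn_subset hpS
  have hfix : stepIn G S B = B := clIn_fixed S p
  have hmax : ∀ A ⊆ S, A.card = 2 → (clIn G S A).card ≤ B.card := fun A hAS hA2 =>
    hpmax A (mem_powersetCard.2 ⟨hAS, hA2⟩)
  have hm3 : 3 ≤ B.card := by
    have h1 : ({x, y, w} : Finset V) ⊆ clIn G S {x, y} := by
      intro z hz
      rcases mem_insert.1 hz with rfl | hz
      · exact subset_clIn S _ (mem_insert_self _ _)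
      rcases mem_insert.1 hz with rfl | hz
      · exact subset_clIn S _ (mem_insert_of_mem (mem_singleton_self _))
      rw [mem_singleton.1 hz]
      exact two_mem hxyS hwS (subset_clIn S _ (mem_insert_self _ _))
        (subset_clIn S _ (mem_insert_of_mem (mem_singleton_self _))) hxy hadjwx hadjwy
    have h2 : ({x, y, w} : Finset V).card = 3 :=
      card_eq_three.2 ⟨x, y, w, hxy, hadjwx.ne', hadjwy.ne', rfl⟩
    calc (3:ℕ) = ({x,y,w} : Finset V).card := h2.symm
      _ ≤ (clIn G S {x,y}).card := card_le_card h1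
      _ ≤ B.card := hmax _ hxyS (card_pair hxy)
  -- the complement C
  set C := S \ B with hCdef
  have hCS : C ⊆ S := sdiff_subset
  have hdisj : ∀ {t : V}, t ∈ B → t ∈ C → False := fun hb hc => (mem_sdiff.1 hc).2 hb
  have hBCsplit : ∀ v, dd G S v = dd G B v + dd G C v := fun v => dd_split hBS v
  have hkm : C.card + B.card = N := by
    rw [hCdef, card_sdiff_add_card_eq_card hBS, hScard]
  rcases eq_or_ne C.card 0 with hk0 | hk0
  · -- C empty: B = S, the maximal pair percolates
    have : S ⊆ B := by
      intro s hs
      by_contra hsB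
      have : s ∈ C := mem_sdiff.2 ⟨hs, hsB⟩
      have := card_pos.2 ⟨s, this⟩
      omega
    exact ⟨p, hpS, hpcard, le_antisymm hBS this⟩
  have hk1 : 1 ≤ C.card := by omega
  -- closedness: each vertex of C has at most one neighbour in B
  have key : ∀ c ∈ C, dd G B c ≤ 1 := by
    intro c hc
    by_contra hcon
    push_neg at hcon
    have hcB : c ∈ B := by
      have hstep : c ∈ stepIn G S B := by
        refine mem_union_right _ (mem_filter.2 ⟨hCS hc, ?_⟩)
        have heq : G.neighborFinset c ∩ S ∩ B = G.neighborFinset c ∩ B := by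
          rw [inter_assoc, inter_eq_right.2 hBS]
        rw [heq]
        exact hcon
      exact hfix ▸ hstep
    exact hdisj hcB hc
  have F1 : ∀ b ∈ B, ∀ c ∈ C, ¬ G.Adj b c → N ≤ dd G S b + dd G S c + 1 := by
    intro b hb c hc hn
    exact hOre b (hBS hb) c (hCS hc) (fun he => hdisj hb (he ▸ hc)) hn
  have hdSc : ∀ c ∈ C, dd G S c ≤ C.card := by
    intro c hc
    have h1 := key c hc
    have h2 := dd_add_one_le (G := G) hc
    have h3 := hBCsplit c
    omega
  have hdSb : ∀ b ∈ B, dd G S b ≤ B.card + dd G C b := by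
    intro b hb
    have h1 := dd_add_one_le (G := G) hb
    have h2 := hBCsplit b
    omega
  rcases Nat.lt_or_ge C.card 2 with hklt | hk2
  · -- |C| = 1
    obtain ⟨c, hceq⟩ := card_eq_one.1 (show C.card = 1 by omega)
    have hcC : c ∈ C := hceq ▸ mem_singleton_self c
    have hcS : c ∈ S := hCS hcC
    have hdCzero : ∀ v : V, ¬ G.Adj v c → dd G C v = 0 := by
      intro v hv
      rw [dd, card_eq_zero]
      apply eq_empty_of_forall_notMem
      intro z hz
      rcases mem_inter.1 hz with ⟨hz1, hz2⟩
      rw [hceq, mem_singleton] at hz2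
      subst hz2
      exact hv ((G.mem_neighborFinset v z).1 hz1)
    have hdCc : dd G C c = 0 := hdCzero c (G.irrefl)
    rcases Nat.eq_zero_or_pos (dd G B c) with hB0 | hBpos
    · exfalso
      obtain ⟨b, hb⟩ : B.Nonempty := card_pos.1 (by omega)
      have hnadj : ¬ G.Adj b c := by
        intro h
        have hb' : b ∈ G.neighborFinset c ∩ B :=
          mem_inter.2 ⟨(G.mem_neighborFinset c b).2 h.symm, hb⟩
        have : 1 ≤ dd G B c := card_pos.2 ⟨b, hb'⟩
        omega
      have h1 := F1 b hb c hcC hnadj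
      have h2 := hBCsplit c
      have h3 := hBCsplit b
      have h5 : dd G C b = 0 := hdCzero b hnadj
      have h6 := dd_add_one_le (G := G) hb
      omega
    · obtain ⟨b0, hb0B, hadjcb0⟩ := mem_nbr_of_dd_pos hBpos
      have hb0S : b0 ∈ S := hBS hb0B
      have hstar : ∀ b ∈ B, b ≠ b0 → ∀ y ∈ B, y ≠ b → G.Adj b y := by
        intro b hb hbne
        have hnadj : ¬ G.Adj b c := by
          intro h
          exact hbne (unique_nbr (key c hcC) h.symm hb hadjcb0 hb0B)
        have h1 := F1 b hb c hcC hnadj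
        have h2 := hBCsplit c
        have h3 := hBCsplit b
        have h4 : dd G C b = 0 := hdCzero b hnadj
        have h5 := key c hcC
        intro y hy hyb
        exact adj_all_of_dd hb (by omega) y hy hyb
      obtain ⟨x2, hx2⟩ : (B.erase b0).Nonempty := by
        apply card_pos.1
        rw [card_erase_of_mem hb0B]
        omega
      have hx2B : x2 ∈ B := mem_of_mem_erase hx2
      have hx2b0 : x2 ≠ b0 := (mem_erase.1 hx2).1
      have hcx2 : c ≠ x2 := fun h => hdisj hx2B (h ▸ hcC)
      have hsub : ({c, x2} : Finset V) ⊆ S := by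
        intro z hz; rcases mem_insert.1 hz with rfl | hz
        · exact hcS
        · rw [mem_singleton.1 hz]; exact hBS hx2B
      refine ⟨{c, x2}, hsub, card_pair hcx2, ?_⟩
      have hccl : c ∈ clIn G S {c, x2} := subset_clIn _ _ (mem_insert_self _ _)
      have hx2cl : x2 ∈ clIn G S {c, x2} :=
        subset_clIn _ _ (mem_insert_of_mem (mem_singleton_self _))
      have hb0cl : b0 ∈ clIn G S {c, x2} :=
        two_mem hsub hb0S hccl hx2cl hcx2 hadjcb0.symm
          ((hstar x2 hx2B hx2b0 b0 hb0B (Ne.symm hx2b0)).symm)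
      have hBcl : ∀ b ∈ B, b ∈ clIn G S {c, x2} := by
        intro b hb
        rcases eq_or_ne b x2 with rfl | hbx2
        · exact hx2cl
        rcases eq_or_ne b b0 with rfl | hbb0
        · exact hb0cl
        · exact two_mem hsub (hBS hb) hx2cl hb0cl hx2b0
            (hstar b hb hbb0 x2 hx2B (Ne.symm hbx2))
            (hstar b hb hbb0 b0 hb0B (Ne.symm hbb0))
      apply Subset.antisymm (clIn_subset hsub)
      intro s hsS
      by_cases hsB : s ∈ B
      · exact hBcl s hsB
      · have hsc : s ∈ C := mem_sdiff.2 ⟨hsS, hsB⟩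
        rw [hceq, mem_singleton] at hsc
        rw [hsc]
        exact hccl

  · by_cases hcaseA : ∃ c0 ∈ C, dd G S c0 + 1 ≤ C.card
    · -- CASE A
      obtain ⟨c0, hc0C, hc0d⟩ := hcaseA
      -- every vertex of B has a neighbour in C
      have hA1 : ∀ b ∈ B, 1 ≤ dd G C b := by
        intro b hb
        by_cases hadj : G.Adj b c0
        · exact card_pos.2 ⟨c0, mem_inter.2 ⟨(G.mem_neighborFinset b c0).2 hadj, hc0C⟩⟩
        · have h1 := F1 b hb c0 hc0C hadj
          have h2 := hBCsplit b
          have h3 := dd_add_one_le (G := G) hb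
          omega
      have hsumBC : ∑ b ∈ B, dd G C b = ∑ c ∈ C, dd G B c := dd_double_count B C
      have hgeB : B.card ≤ ∑ b ∈ B, dd G C b := by
        calc B.card = ∑ _b ∈ B, 1 := by simp
          _ ≤ ∑ b ∈ B, dd G C b := Finset.sum_le_sum hA1
      have hleC : ∑ c ∈ C, dd G B c ≤ C.card := by
        calc ∑ c ∈ C, dd G B c ≤ ∑ _c ∈ C, 1 := Finset.sum_le_sum key
          _ = C.card := by simp
      have hmk : B.card ≤ C.card := by omega
      -- apply the induction hypothesis inside C
      have hOreC : ∀ x ∈ C, ∀ y ∈ C, x ≠ y → ¬ G.Adj x y →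
          C.card ≤ dd G C x + dd G C y + 1 := by
        intro a ha b hb hne hnadj
        have h1 := hOre a (hCS ha) b (hCS hb) hne hnadj
        have h2 := key a ha
        have h3 := key b hb
        have h4 := hBCsplit a
        have h5 := hBCsplit b
        omega
      have hC5C : ¬ (C.card = 5 ∧ ∀ x ∈ C, dd G C x = 2) := by
        rintro ⟨hk5, hreg⟩
        have h2' : dd G (C.erase c0) c0 = dd G C c0 := by
          rw [dd, dd]
          congr 1
          ext z
          simp only [mem_inter, mem_erase]
          constructor
          · rintro ⟨h1, _, h3⟩; exact ⟨h1, h3⟩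
          · rintro ⟨h1, h3⟩
            exact ⟨h1, fun he => G.irrefl (he ▸ (G.mem_neighborFinset c0 z).1 h1), h3⟩
        obtain ⟨c', hc'E, hnadj⟩ := exists_nonadj (v := c0) (B := C.erase c0) (by
          rw [h2', hreg c0 hc0C, card_erase_of_mem hc0C]; omega)
        have hc'C : c' ∈ C := mem_of_mem_erase hc'E
        have hne : c0 ≠ c' := fun h => (mem_erase.1 hc'E).1 h.symm
        have h1 := hOre c0 (hCS hc0C) c' (hCS hc'C) hne hnadj
        have h2 := key c0 hc0C
        have h3 := key c' hc'C
        have h4 := hBCsplit c0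
        have h5 := hBCsplit c'
        have h6 := hreg c0 hc0C
        have h7 := hreg c' hc'C
        omega
      obtain ⟨q, hqC, hq2, hqcl⟩ := IH C.card (by omega) hk2 C rfl hOreC hC5C
      have hCD : C ⊆ clIn G S q := by
        rw [← hqcl]
        exact clIn_mono hCS Subset.rfl
      have hDm : (clIn G S q).card ≤ B.card := hmax q (hqC.trans hCS) hq2
      have hkmeq : B.card = C.card := le_antisymm hmk (le_trans (card_le_card hCD) hDm)
      have hDC : clIn G S q = C :=
        (eq_of_subset_of_card_le hCD (by omega)).symm
      -- every vertex of B has exactly one neighbour in C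
      have hA5 : ∀ b ∈ B, dd G C b = 1 := by
        intro b hb
        by_contra hne
        have h2 : 2 ≤ dd G C b := by have := hA1 b hb; omega
        have hfixD : stepIn G S (clIn G S q) = clIn G S q := clIn_fixed S q
        have hbD : b ∈ clIn G S q := by
          have hstep : b ∈ stepIn G S (clIn G S q) := by
            refine mem_union_right _ (mem_filter.2 ⟨hBS hb, ?_⟩)
            have hsub : G.neighborFinset b ∩ C ⊆ G.neighborFinset b ∩ S ∩ clIn G S q := by
              intro z hz
              rcases mem_inter.1 hz with ⟨hz1, hz2⟩
              exact mem_inter.2 ⟨mem_inter.2 ⟨hz1, hCS hz2⟩, hDC ▸ hz2⟩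
            have := card_le_card hsub
            unfold dd at h2
            omega
          exact hfixD ▸ hstep
        rw [hDC] at hbD
        exact hdisj hb hbD
      -- every vertex of C has exactly one neighbour in B
      have hA6 : ∀ c ∈ C, dd G B c = 1 := by
        intro c hc
        by_contra hne
        have h0 : dd G B c = 0 := by have := key c hc; omega
        have hlt : ∑ c' ∈ C, dd G B c' < C.card := by
          have h1 : ∑ c' ∈ C.erase c, dd G B c' ≤ (C.erase c).card * 1 :=
            Finset.sum_le_card_nsmul _ _ 1 (fun x hx => key x (mem_of_mem_erase hx))
          have h2 : ∑ c' ∈ C.erase c, dd G B c' + dd G B c = ∑ c' ∈ C, dd G B c' :=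
            Finset.sum_erase_add _ _ hc
          have h3 := card_erase_of_mem hc
          omega
        have hsum2 : B.card ≤ ∑ c' ∈ C, dd G B c' := by omega
        omega
      -- B is complete
      have hstarA : ∀ b ∈ B, ¬ G.Adj b c0 → ∀ z ∈ B, z ≠ b → G.Adj b z := by
        intro b hb hnadj
        have h1 := F1 b hb c0 hc0C hnadj
        have h2 := hBCsplit b
        have h3 := hA5 b hb
        apply adj_all_of_dd hb
        omega
      have hcomp : ∀ b ∈ B, ∀ z ∈ B, z ≠ b → G.Adj b z := by
        intro b hb z hz hzb
        by_cases hbc0 : G.Adj b c0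
        · have hzc0 : ¬ G.Adj z c0 := by
            intro h
            have hb' : b ∈ G.neighborFinset c0 ∩ B :=
              mem_inter.2 ⟨(G.mem_neighborFinset c0 b).2 hbc0.symm, hb⟩
            have hz' : z ∈ G.neighborFinset c0 ∩ B :=
              mem_inter.2 ⟨(G.mem_neighborFinset c0 z).2 h.symm, hz⟩
            have hcard : 2 ≤ dd G B c0 := by
              have hsub : ({b, z} : Finset V) ⊆ G.neighborFinset c0 ∩ B := by
                intro t ht; rcases mem_insert.1 ht with rfl | ht
                · exact hb'
                · rw [mem_singleton.1 ht]; exact hz'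
              calc (2:ℕ) = ({b, z} : Finset V).card := (card_pair (Ne.symm hzb)).symm
                _ ≤ _ := card_le_card hsub
            have := key c0 hc0C
            omega
          exact (hstarA z hz hzc0 b hb hzb.symm).symm
        · exact hstarA b hb hbc0 z hz hzb
      -- each vertex of C is adjacent to all but at most one vertex of C
      have hA8 : ∀ c ∈ C, C.card ≤ dd G S c + 1 := by
        intro c hc
        obtain ⟨b, hbB, hnadj⟩ := exists_nonadj (G := G) (v := c) (B := B) (by
          have := key c hc; omega)
        have h1 := F1 b hbB c hc (fun h => hnadj h.symm)
        have h2 := hBCsplit b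
        have h3 := hA5 b hbB
        have h4 := dd_add_one_le (G := G) hbB
        omega
      have hmissC : ∀ c ∈ C, (C.erase c \ G.neighborFinset c).card ≤ 1 := by
        intro c hc
        have h1 : (C.erase c \ G.neighborFinset c).card + (C.erase c ∩ G.neighborFinset c).card
            = (C.erase c).card := card_sdiff_add_card_inter _ _
        have h2 : C.erase c ∩ G.neighborFinset c = G.neighborFinset c ∩ C := by
          ext z
          simp only [mem_inter, mem_erase]
          constructor
          · rintro ⟨⟨_, h3⟩, h4⟩; exact ⟨h4, h3⟩
          · rintro ⟨h4, h3⟩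
            exact ⟨⟨fun he => G.irrefl (he ▸ (G.mem_neighborFinset c z).1 h4), h3⟩, h4⟩
        have h3 := card_erase_of_mem hc
        have h4 := hA8 c hc
        have h5 := key c hc
        have h6 := hBCsplit c
        unfold dd at h4 h5 h6
        rw [h2] at h1
        omega
      -- now build the percolating pair
      obtain ⟨b1, hb1B, hadjc0b1⟩ := mem_nbr_of_dd_pos (le_of_eq (hA6 c0 hc0C).symm)
      obtain ⟨xx, hxx⟩ : (B.erase b1).Nonempty := by
        apply card_pos.1
        rw [card_erase_of_mem hb1B]
        omega
      have hxxB : xx ∈ B := mem_of_mem_erase hxx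
      have hxxb1 : xx ≠ b1 := (mem_erase.1 hxx).1
      have hc0xx : c0 ≠ xx := fun h => hdisj hxxB (h ▸ hc0C)
      have hsub : ({c0, xx} : Finset V) ⊆ S := by
        intro z hz; rcases mem_insert.1 hz with rfl | hz
        · exact hCS hc0C
        · rw [mem_singleton.1 hz]; exact hBS hxxB
      refine ⟨{c0, xx}, hsub, card_pair hc0xx, ?_⟩
      have hc0cl : c0 ∈ clIn G S {c0, xx} := subset_clIn _ _ (mem_insert_self _ _)
      have hxxcl : xx ∈ clIn G S {c0, xx} :=
        subset_clIn _ _ (mem_insert_of_mem (mem_singleton_self _))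
      have hb1cl : b1 ∈ clIn G S {c0, xx} := by
        rcases eq_or_ne b1 xx with rfl | hbne
        · exact hxxcl
        · exact two_mem hsub (hBS hb1B) hc0cl hxxcl hc0xx hadjc0b1.symm
            (hcomp b1 hb1B xx hxxB hxxb1).symm.symm
      have hBcl : ∀ b ∈ B, b ∈ clIn G S {c0, xx} := by
        intro b hb
        rcases eq_or_ne b xx with rfl | hbxx
        · exact hxxcl
        rcases eq_or_ne b b1 with rfl | hbb1
        · exact hb1cl
        · exact two_mem hsub (hBS hb) hxxcl hb1cl hxxb1
            (hcomp b hb xx hxxB (Ne.symm hbxx))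
            (hcomp b hb b1 hb1B (Ne.symm hbb1))
      -- a second active vertex of C
      obtain ⟨c', hc'C, hadjc0c'⟩ := mem_nbr_of_dd_pos (G := G) (B := C) (v := c0) (by
        have h1 := hA8 c0 hc0C
        have h2 := hA6 c0 hc0C
        have h3 := hBCsplit c0
        omega)
      have hc'ne : c' ≠ c0 := fun h => G.irrefl (h ▸ hadjc0c')
      have hc'cl : c' ∈ clIn G S {c0, xx} := by
        obtain ⟨b', hb'B, hadjc'b'⟩ := mem_nbr_of_dd_pos (le_of_eq (hA6 c' hc'C).symm)
        exact two_mem hsub (hCS hc'C) (hBcl b' hb'B) hc0cl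
          (fun h => hdisj hb'B (h ▸ hc0C)) hadjc'b' hadjc0c'.symm
      -- all of C gets activated
      have hCcl : ∀ c ∈ C, c ∈ clIn G S {c0, xx} := by
        intro c hc
        rcases eq_or_ne c c0 with rfl | hcc0
        · exact hc0cl
        rcases eq_or_ne c c' with rfl | hcc' 
        · exact hc'cl
        obtain ⟨bc, hbcB, hadjcbc⟩ := mem_nbr_of_dd_pos (le_of_eq (hA6 c hc).symm)
        have hcf : G.Adj c c0 ∨ G.Adj c c' := by
          by_contra hcon2
          push_neg at hcon2
          have hsub2 : ({c0, c'} : Finset V) ⊆ C.erase c \ G.neighborFinset c := by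
            intro t ht
            rcases mem_insert.1 ht with rfl | ht
            · exact mem_sdiff.2 ⟨mem_erase.2 ⟨Ne.symm hcc0, hc0C⟩,
                fun hm => hcon2.1 ((G.mem_neighborFinset c t).1 hm)⟩
            · rw [mem_singleton.1 ht]
              exact mem_sdiff.2 ⟨mem_erase.2 ⟨Ne.symm hcc', hc'C⟩,
                fun hm => hcon2.2 ((G.mem_neighborFinset c c').1 hm)⟩
          have h2 : (2:ℕ) = ({c0, c'} : Finset V).card := (card_pair (Ne.symm hc'ne)).symm
          have := card_le_card hsub2
          have := hmissC c hc
          omega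
        rcases hcf with hcf | hcf
        · exact two_mem hsub (hCS hc) (hBcl bc hbcB) hc0cl
            (fun h => hdisj hbcB (h ▸ hc0C)) hadjcbc hcf
        · exact two_mem hsub (hCS hc) (hBcl bc hbcB) hc'cl
            (fun h => hdisj hbcB (h ▸ hc'C)) hadjcbc hcf
      apply Subset.antisymm (clIn_subset hsub)
      intro s hsS
      by_cases hsB : s ∈ B
      · exact hBcl s hsB
      · exact hCcl s (mem_sdiff.2 ⟨hsS, hsB⟩)
    · -- CASE B
      push_neg at hcaseA
      have hB1 : ∀ c ∈ C, dd G B c = 1 ∧ dd G C c + 1 = C.card := by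
        intro c hc
        have h1 := hcaseA c hc
        have h2 := hdSc c hc
        have h3 := key c hc
        have h4 := dd_add_one_le (G := G) hc
        have h5 := hBCsplit c
        constructor <;> omega
      have hclique : ∀ c ∈ C, ∀ c' ∈ C, c' ≠ c → G.Adj c c' := by
        intro c hc
        apply adj_all_of_dd (S := C) hc
        have := (hB1 c hc).2
        omega
      have hsum : ∑ b ∈ B, dd G C b = C.card := by
        rw [dd_double_count]
        calc ∑ c ∈ C, dd G B c = ∑ _c ∈ C, 1 :=
              Finset.sum_congr rfl (fun c hc => (hB1 c hc).1)
          _ = C.card := by simp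
      by_cases hBstar : ∃ bs ∈ B, dd G C bs = C.card
      · -- CASE B1 : one vertex of B adjacent to all of C
        obtain ⟨bs, hbsB, hbs⟩ := hBstar
        have hbsadj : ∀ c ∈ C, G.Adj bs c := by
          have heq : G.neighborFinset bs ∩ C = C :=
            eq_of_subset_of_card_le inter_subset_right (le_of_eq hbs.symm)
          intro c hc
          have : c ∈ G.neighborFinset bs ∩ C := by rw [heq]; exact hc
          exact (G.mem_neighborFinset bs c).1 (mem_inter.1 this).1
        have hrest0 : ∀ b ∈ B, b ≠ bs → dd G C b = 0 := by
          intro b hb hne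
          by_contra h
          have h1 : 1 ≤ dd G C b := by omega
          have hsub2 : ({bs, b} : Finset V) ⊆ B := by
            intro t ht; rcases mem_insert.1 ht with rfl | ht
            · exact hbsB
            · rw [mem_singleton.1 ht]; exact hb
          have h2 : C.card + 1 ≤ ∑ b' ∈ B, dd G C b' := by
            calc C.card + 1 ≤ dd G C bs + dd G C b := by omega
              _ = ∑ b' ∈ ({bs, b} : Finset V), dd G C b' := (sum_pair (Ne.symm hne)).symm
              _ ≤ ∑ b' ∈ B, dd G C b' :=
                  Finset.sum_le_sum_of_subset hsub2
          omega
        obtain ⟨c1, hc1C⟩ : C.Nonempty := card_pos.1 (by omega)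
        have hstarB : ∀ b ∈ B, b ≠ bs → ∀ z ∈ B, z ≠ b → G.Adj b z := by
          intro b hb hne
          have h0 := hrest0 b hb hne
          have hnadj : ¬ G.Adj b c1 := by
            intro h
            have : 1 ≤ dd G C b := card_pos.2
              ⟨c1, mem_inter.2 ⟨(G.mem_neighborFinset b c1).2 h, hc1C⟩⟩
            omega
          have h1 := F1 b hb c1 hc1C hnadj
          have h2 := hBCsplit b
          have h3 := hdSc c1 hc1C
          apply adj_all_of_dd hb
          omega
        obtain ⟨xx, hxx⟩ : (B.erase bs).Nonempty := by
          apply card_pos.1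
          rw [card_erase_of_mem hbsB]
          omega
        have hxxB : xx ∈ B := mem_of_mem_erase hxx
        have hxxbs : xx ≠ bs := (mem_erase.1 hxx).1
        have hc1xx : c1 ≠ xx := fun h => hdisj hxxB (h ▸ hc1C)
        have hsubP : ({c1, xx} : Finset V) ⊆ S := by
          intro t ht; rcases mem_insert.1 ht with rfl | ht
          · exact hCS hc1C
          · rw [mem_singleton.1 ht]; exact hBS hxxB
        refine ⟨{c1, xx}, hsubP, card_pair hc1xx, ?_⟩
        have hc1cl : c1 ∈ clIn G S {c1, xx} := subset_clIn _ _ (mem_insert_self _ _)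
        have hxxcl : xx ∈ clIn G S {c1, xx} :=
          subset_clIn _ _ (mem_insert_of_mem (mem_singleton_self _))
        have hbscl : bs ∈ clIn G S {c1, xx} :=
          two_mem hsubP (hBS hbsB) hc1cl hxxcl hc1xx (hbsadj c1 hc1C)
            (hstarB xx hxxB hxxbs bs hbsB (Ne.symm hxxbs)).symm
        have hBcl : ∀ b ∈ B, b ∈ clIn G S {c1, xx} := by
          intro b hb
          rcases eq_or_ne b xx with rfl | hbxx
          · exact hxxcl
          rcases eq_or_ne b bs with rfl | hbbs
          · exact hbscl
          · exact two_mem hsubP (hBS hb) hxxcl hbscl hxxbs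
              (hstarB b hb hbbs xx hxxB (Ne.symm hbxx))
              (hstarB b hb hbbs bs hbsB (Ne.symm hbbs))
        have hCcl : ∀ c ∈ C, c ∈ clIn G S {c1, xx} := by
          intro c hc
          rcases eq_or_ne c c1 with rfl | hcc1
          · exact hc1cl
          · exact two_mem hsubP (hCS hc) hbscl hc1cl
              (fun h => hdisj hbsB (h ▸ hc1C)) (hbsadj c hc).symm
              (hclique c hc c1 hc1C (Ne.symm hcc1))
        apply Subset.antisymm (clIn_subset hsubP)
        intro s hsS
        by_cases hsB : s ∈ B
        · exact hBcl s hsB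
        · exact hCcl s (mem_sdiff.2 ⟨hsS, hsB⟩)
      · -- CASE B2
        push_neg at hBstar
        have hnotall : ∀ b ∈ B, dd G C b < C.card := by
          intro b hb
          have h1 := dd_le_card (G := G) C b
          have h2 := hBstar b hb
          omega
        have hdSbB2 : ∀ b ∈ B, B.card ≤ dd G S b + 1 := by
          intro b hb
          obtain ⟨cnb, hcnbC, hcnadj⟩ := exists_nonadj (G := G) (hnotall b hb)
          have h1 := F1 b hb cnb hcnbC hcnadj
          have h3 := hdSc cnb hcnbC
          omega
        obtain ⟨c1, hc1C, c2, hc2C, hc12⟩ := one_lt_card.1 (show 1 < C.card by omega)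
        obtain ⟨b1, hb1B, hadjc1b1⟩ := mem_nbr_of_dd_pos (G := G)
          (le_of_eq ((hB1 c1 hc1C).1).symm)
        -- |B| ≥ |C| + 1 by maximality
        have hmk1 : C.card + 1 ≤ B.card := by
          have hb1c2 : b1 ≠ c2 := fun h => hdisj hb1B (h ▸ hc2C)
          have hsubD : ({b1, c2} : Finset V) ⊆ S := by
            intro t ht; rcases mem_insert.1 ht with rfl | ht
            · exact hBS hb1B
            · rw [mem_singleton.1 ht]; exact hCS hc2C
          have hb1D : b1 ∈ clIn G S {b1, c2} := subset_clIn _ _ (mem_insert_self _ _)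
          have hc2D : c2 ∈ clIn G S {b1, c2} :=
            subset_clIn _ _ (mem_insert_of_mem (mem_singleton_self _))
          have hc1D : c1 ∈ clIn G S {b1, c2} :=
            two_mem hsubD (hCS hc1C) hb1D hc2D hb1c2 hadjc1b1
              (hclique c1 hc1C c2 hc2C (Ne.symm hc12))
          have hCD2 : ∀ c ∈ C, c ∈ clIn G S {b1, c2} := by
            intro c hc
            rcases eq_or_ne c c2 with rfl | hcc2
            · exact hc2D
            rcases eq_or_ne c c1 with rfl | hcc1
            · exact hc1D
            · exact two_mem hsubD (hCS hc) hc1D hc2D hc12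
                (hclique c hc c1 hc1C (Ne.symm hcc1))
                (hclique c hc c2 hc2C (Ne.symm hcc2))
          have hins : insert b1 C ⊆ clIn G S {b1, c2} := by
            intro t ht
            rcases mem_insert.1 ht with rfl | ht
            · exact hb1D
            · exact hCD2 t ht
          have hcardins : (insert b1 C).card = C.card + 1 :=
            card_insert_of_notMem (fun h => hdisj hb1B h)
          calc C.card + 1 = (insert b1 C).card := hcardins.symm
            _ ≤ (clIn G S {b1, c2}).card := card_le_card hins
            _ ≤ B.card := hmax _ hsubD (card_pair hb1c2)
        -- vertices of B with no neighbour in C are adjacent to everything in B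
        have hstarZ : ∀ b ∈ B, dd G C b = 0 → ∀ z ∈ B, z ≠ b → G.Adj b z := by
          intro b hb h0
          have hnadj : ¬ G.Adj b c1 := by
            intro h
            have : 1 ≤ dd G C b := card_pos.2
              ⟨c1, mem_inter.2 ⟨(G.mem_neighborFinset b c1).2 h, hc1C⟩⟩
            omega
          have h1 := F1 b hb c1 hc1C hnadj
          have h2 := hBCsplit b
          have h3 := hdSc c1 hc1C
          apply adj_all_of_dd hb
          omega
        -- a vertex of B with no neighbour in C exists
        obtain ⟨b0, hb0B, hb0dC⟩ : ∃ b0 ∈ B, dd G C b0 = 0 := by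
          by_contra hcon2
          push_neg at hcon2
          have hsubW : B ⊆ B.filter (fun b => 1 ≤ dd G C b) := by
            intro b hb
            refine mem_filter.2 ⟨hb, ?_⟩
            have := hcon2 b hb
            omega
          have h1 : B.card ≤ ∑ b ∈ B.filter (fun b => 1 ≤ dd G C b), dd G C b := by
            calc B.card ≤ (B.filter (fun b => 1 ≤ dd G C b)).card := card_le_card hsubW
              _ = ∑ _b ∈ B.filter (fun b => 1 ≤ dd G C b), 1 := by simp
              _ ≤ _ := Finset.sum_le_sum (fun b hb => (mem_filter.1 hb).2)
          have h2 : ∑ b ∈ B.filter (fun b => 1 ≤ dd G C b), dd G C b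
              ≤ ∑ b ∈ B, dd G C b := Finset.sum_le_sum_of_subset (filter_subset _ _)
          omega
        have hb1dC : 1 ≤ dd G C b1 := card_pos.2
          ⟨c1, mem_inter.2 ⟨(G.mem_neighborFinset b1 c1).2 hadjc1b1.symm, hc1C⟩⟩
        have hb0b1 : b0 ≠ b1 := by
          intro h
          rw [h] at hb0dC
          omega
        -- the closure of {c1, b0}
        set F := clIn G S {c1, b0} with hFdef
        have hc1b0 : c1 ≠ b0 := fun h => hdisj hb0B (h ▸ hc1C)
        have hsubF : ({c1, b0} : Finset V) ⊆ S := by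
          intro t ht; rcases mem_insert.1 ht with rfl | ht
          · exact hCS hc1C
          · rw [mem_singleton.1 ht]; exact hBS hb0B
        have hFfix : stepIn G S F = F := clIn_fixed S _
        have hFS : F ⊆ S := clIn_subset hsubF
        have hc1F : c1 ∈ F := subset_clIn _ _ (mem_insert_self _ _)
        have hb0F : b0 ∈ F := subset_clIn _ _ (mem_insert_of_mem (mem_singleton_self _))
        have hb1F : b1 ∈ F :=
          two_mem hsubF (hBS hb1B) hc1F hb0F hc1b0 hadjc1b1.symm
            (hstarZ b0 hb0B hb0dC b1 hb1B (Ne.symm hb0b1)).symm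
        have hZF : ∀ b ∈ B, dd G C b = 0 → b ∈ F := by
          intro b hb h0
          rcases eq_or_ne b b0 with rfl | hne
          · exact hb0F
          have hbb1 : b ≠ b1 := by
            intro h
            rw [h] at h0
            omega
          exact two_mem hsubF (hBS hb) hb0F hb1F hb0b1
            (hstarZ b hb h0 b0 hb0B (Ne.symm hne))
            (hstarZ b hb h0 b1 hb1B (Ne.symm hbb1))
        have hle1F : ∀ b ∈ B, b ∉ F → (G.neighborFinset b ∩ S ∩ F).card ≤ 1 := by
          intro b hb hbF
          by_contra hcon2
          push_neg at hcon2
          have hstep : b ∈ stepIn G S F :=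
            mem_union_right _ (mem_filter.2 ⟨hBS hb, by omega⟩)
          exact hbF (hFfix ▸ hstep)
        -- bound for non-activated vertices of B
        have hWbound : ∀ b ∈ B, b ∉ F →
            (B ∩ F).card + dd G B b ≤ B.card ∧ (B ∩ F).card ≤ dd G C b + 1 := by
          intro b hb hbF
          have hnF := hle1F b hb hbF
          have hsplit2 : ((B ∩ F) \ G.neighborFinset b).card
              + (B ∩ F ∩ G.neighborFinset b).card = (B ∩ F).card :=
            card_sdiff_add_card_inter _ _
          have hp1 : (B ∩ F ∩ G.neighborFinset b).card ≤ 1 := by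
            refine le_trans (card_le_card ?_) hnF
            intro z hz
            rcases mem_inter.1 hz with ⟨hz1, hz2⟩
            rcases mem_inter.1 hz1 with ⟨hz3, hz4⟩
            exact mem_inter.2 ⟨mem_inter.2 ⟨hz2, hBS hz3⟩, hz4⟩
          have hp2 : ((B ∩ F) \ G.neighborFinset b).card
              ≤ (B.erase b \ G.neighborFinset b).card := by
            apply card_le_card
            intro z hz
            rcases mem_sdiff.1 hz with ⟨hz1, hz2⟩
            rcases mem_inter.1 hz1 with ⟨hz3, hz4⟩
            exact mem_sdiff.2 ⟨mem_erase.2 ⟨fun h => hbF (h ▸ hz4), hz3⟩, hz2⟩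
          have hp3 : (B.erase b \ G.neighborFinset b).card
              + (B.erase b ∩ G.neighborFinset b).card = (B.erase b).card :=
            card_sdiff_add_card_inter _ _
          have hp4 : B.erase b ∩ G.neighborFinset b = G.neighborFinset b ∩ B := by
            ext z
            simp only [mem_inter, mem_erase]
            constructor
            · rintro ⟨⟨_, h3⟩, h4⟩; exact ⟨h4, h3⟩
            · rintro ⟨h4, h3⟩
              exact ⟨⟨fun he => G.irrefl (he ▸ (G.mem_neighborFinset b z).1 h4), h3⟩, h4⟩
          have hp5 := card_erase_of_mem hb
          have hp6 : 1 ≤ B.card := by omega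
          have hgoal1 : (B ∩ F).card + dd G B b ≤ B.card := by
            unfold dd
            rw [hp4] at hp3
            omega
          refine ⟨hgoal1, ?_⟩
          have h7 := hdSbB2 b hb
          have h8 := hBCsplit b
          omega
        have hnonadjb1 : ∀ b ∈ B, b ∉ F → ¬ G.Adj b b1 := by
          intro b hb hbF hadj
          have hbb0 : b ≠ b0 := fun h => hbF (h ▸ hb0F)
          have hadj0 : G.Adj b b0 := (hstarZ b0 hb0B hb0dC b hb hbb0).symm
          have hsub2 : ({b0, b1} : Finset V) ⊆ G.neighborFinset b ∩ S ∩ F := by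
            intro t ht; rcases mem_insert.1 ht with rfl | ht
            · exact mem_inter.2 ⟨mem_inter.2
                ⟨(G.mem_neighborFinset b t).2 hadj0, hBS hb0B⟩, hb0F⟩
            · rw [mem_singleton.1 ht]
              exact mem_inter.2 ⟨mem_inter.2
                ⟨(G.mem_neighborFinset b b1).2 hadj, hBS hb1B⟩, hb1F⟩
          have h2 : (2:ℕ) = ({b0, b1} : Finset V).card := (card_pair hb0b1).symm
          have := card_le_card hsub2
          have := hle1F b hb hbF
          omega
        have hcardW' : (B \ F).card + (B ∩ F).card = B.card := card_sdiff_add_card_inter B F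
        have hb1W' : b1 ∉ B \ F := fun h => (mem_sdiff.1 h).2 hb1F
        have hsumW' : ∑ b ∈ B \ F, dd G C b + dd G C b1 ≤ C.card := by
          have hsubi : insert b1 (B \ F) ⊆ B := by
            intro t ht
            rcases mem_insert.1 ht with rfl | ht
            · exact hb1B
            · exact (mem_sdiff.1 ht).1
          have h1 : ∑ b ∈ insert b1 (B \ F), dd G C b ≤ ∑ b ∈ B, dd G C b :=
            Finset.sum_le_sum_of_subset hsubi
          rw [Finset.sum_insert hb1W'] at h1
          omega
        have hWlow : ∀ b ∈ B \ F, 1 ≤ dd G C b := by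
          intro b hb
          rcases mem_sdiff.1 hb with ⟨hbB, hbF⟩
          by_contra h
          exact hbF (hZF b hbB (by omega))
        have hW'sumlow : (B \ F).card ≤ ∑ b ∈ B \ F, dd G C b := by
          calc (B \ F).card = ∑ _b ∈ B \ F, 1 := by simp
            _ ≤ _ := Finset.sum_le_sum hWlow
        have hfB2 : 2 ≤ (B ∩ F).card := by
          have : ({b0, b1} : Finset V) ⊆ B ∩ F := by
            intro t ht; rcases mem_insert.1 ht with rfl | ht
            · exact mem_inter.2 ⟨hb0B, hb0F⟩
            · rw [mem_singleton.1 ht]; exact mem_inter.2 ⟨hb1B, hb1F⟩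
          calc (2:ℕ) = ({b0, b1} : Finset V).card := (card_pair hb0b1).symm
            _ ≤ _ := card_le_card this
        rcases Nat.eq_zero_or_pos (B \ F).card with hw0 | hwpos
        · -- B is fully activated : the pair {c1, b0} percolates
          have hBF : B ⊆ F := by
            intro b hb
            by_contra hbF
            have : b ∈ B \ F := mem_sdiff.2 ⟨hb, hbF⟩
            have := card_pos.2 ⟨b, this⟩
            omega
          refine ⟨{c1, b0}, hsubF, card_pair hc1b0, ?_⟩
          apply Subset.antisymm hFS
          intro s hsS
          by_cases hsB : s ∈ B
          · exact hBF hsB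
          · have hsC : s ∈ C := mem_sdiff.2 ⟨hsS, hsB⟩
            rcases eq_or_ne s c1 with rfl | hsc1
            · exact hc1F
            obtain ⟨bc, hbcB, hadjsbc⟩ := mem_nbr_of_dd_pos (G := G)
              (le_of_eq ((hB1 s hsC).1).symm)
            exact two_mem hsubF (hCS hsC) (hBF hbcB) hc1F
              (fun h => hdisj hbcB (h ▸ hc1C)) hadjsbc
              (hclique s hsC c1 hc1C (Ne.symm hsc1))
        · rcases Nat.lt_or_ge (B \ F).card 2 with hw1 | hw2
          · -- exactly one vertex of B not activated
            obtain ⟨b', hb'eq⟩ := card_eq_one.1 (show (B \ F).card = 1 by omega)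
            have hb'W' : b' ∈ B \ F := hb'eq ▸ mem_singleton_self b'
            rcases mem_sdiff.1 hb'W' with ⟨hb'B, hb'F⟩
            have hb'sum : ∑ b ∈ B \ F, dd G C b = dd G C b' := by
              rw [hb'eq, Finset.sum_singleton]
            have hbd := hWbound b' hb'B hb'F
            -- forced equalities
            have heq1 : dd G C b' + 1 = C.card ∧ dd G C b1 = 1 ∧ C.card + 1 = B.card := by
              constructor
              · omega
              constructor <;> omega
            obtain ⟨he1, he2, he3⟩ := heq1
            have hb1b' : b1 ≠ b' := fun h => hb'F (h ▸ hb1F)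
            -- all other vertices of B have no C-neighbour
            have hrest0 : ∀ b ∈ B, b ≠ b1 → b ≠ b' → dd G C b = 0 := by
              intro b hb hne1 hne2
              have hsubp : ({b1, b'} : Finset V) ⊆ B := by
                intro t ht; rcases mem_insert.1 ht with rfl | ht
                · exact hb1B
                · rw [mem_singleton.1 ht]; exact hb'B
              have hsplitsum : ∑ t ∈ B \ {b1, b'}, dd G C t
                  + ∑ t ∈ ({b1, b'} : Finset V), dd G C t = ∑ t ∈ B, dd G C t :=
                Finset.sum_sdiff hsubp
              rw [sum_pair hb1b'] at hsplitsum
              have hz : ∑ t ∈ B \ {b1, b'}, dd G C t = 0 := by omega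
              have hbmem : b ∈ B \ {b1, b'} := by
                refine mem_sdiff.2 ⟨hb, ?_⟩
                intro hmem
                rcases mem_insert.1 hmem with h | h
                · exact hne1 h
                · exact hne2 (mem_singleton.1 h)
              exact (Finset.sum_eq_zero_iff.1 hz) b hbmem
            -- neighbourhood structure of b1 and b'
            have hnbrb1C : G.neighborFinset b1 ∩ C = {c1} :=
              nbr_eq_singleton he2 hadjc1b1.symm hc1C
            have hnbrc1B : G.neighborFinset c1 ∩ B = {b1} :=
              nbr_eq_singleton (hB1 c1 hc1C).1 hadjc1b1 hb1B
            have hnbrb'C : G.neighborFinset b' ∩ C = C.erase c1 := by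
              apply eq_of_subset_of_card_le
              · intro z hz
                rcases mem_inter.1 hz with ⟨hz1, hz2⟩
                refine mem_erase.2 ⟨?_, hz2⟩
                rintro rfl
                have : b' ∈ G.neighborFinset z ∩ B := mem_inter.2
                  ⟨(G.mem_neighborFinset z b').2 ((G.mem_neighborFinset b' z).1 hz1).symm, hb'B⟩
                rw [hnbrc1B] at this
                exact hb1b' (mem_singleton.1 this).symm
              · rw [card_erase_of_mem hc1C]
                have : (G.neighborFinset b' ∩ C).card = dd G C b' := rfl
                omega
            have hb'adjC : ∀ c ∈ C, c ≠ c1 → G.Adj b' c := by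
              intro c hc hne
              have : c ∈ G.neighborFinset b' ∩ C := by
                rw [hnbrb'C]
                exact mem_erase.2 ⟨hne, hc⟩
              exact (G.mem_neighborFinset b' c).1 (mem_inter.1 this).1
            have hnadjb1b' : ¬ G.Adj b' b1 := hnonadjb1 b' hb'B hb'F
            have hdBb1 : B.card ≤ dd G B b1 + 2 := by
              have h1 := hdSbB2 b1 hb1B
              have h2 := hBCsplit b1
              omega
            by_cases hk3 : 3 ≤ C.card
            · -- percolating pair {c2, z}
              obtain ⟨z, hz⟩ : (B \ {b1, b'}).Nonempty := by
                apply card_pos.1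
                have hsubp : ({b1, b'} : Finset V) ⊆ B := by
                  intro t ht; rcases mem_insert.1 ht with rfl | ht
                  · exact hb1B
                  · rw [mem_singleton.1 ht]; exact hb'B
                have := card_sdiff_add_card_eq_card hsubp
                rw [card_pair hb1b'] at this
                omega
              rcases mem_sdiff.1 hz with ⟨hzB, hznot⟩
              have hzb1 : z ≠ b1 := fun h => hznot (h ▸ mem_insert_self _ _)
              have hzb' : z ≠ b' := fun h =>
                hznot (h ▸ mem_insert_of_mem (mem_singleton_self _))
              have hzdC : dd G C z = 0 := hrest0 z hzB hzb1 hzb'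
              have hzstar := hstarZ z hzB hzdC
              have hc2z : c2 ≠ z := fun h => hdisj hzB (h ▸ hc2C)
              have hsubP : ({c2, z} : Finset V) ⊆ S := by
                intro t ht; rcases mem_insert.1 ht with rfl | ht
                · exact hCS hc2C
                · rw [mem_singleton.1 ht]; exact hBS hzB
              refine ⟨{c2, z}, hsubP, card_pair hc2z, ?_⟩
              have hc2P : c2 ∈ clIn G S {c2, z} := subset_clIn _ _ (mem_insert_self _ _)
              have hzP : z ∈ clIn G S {c2, z} :=
                subset_clIn _ _ (mem_insert_of_mem (mem_singleton_self _))
              have hb'P : b' ∈ clIn G S {c2, z} :=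
                two_mem hsubP (hBS hb'B) hc2P hzP hc2z
                  (hb'adjC c2 hc2C (Ne.symm hc12)) (hzstar b' hb'B (Ne.symm hzb')).symm
              have hCP : ∀ c ∈ C, c ≠ c1 → c ∈ clIn G S {c2, z} := by
                intro c hc hne
                rcases eq_or_ne c c2 with rfl | hcc2
                · exact hc2P
                · exact two_mem hsubP (hCS hc) hc2P hb'P
                    (fun h => hdisj hb'B (h ▸ hc2C))
                    (hclique c hc c2 hc2C (Ne.symm hcc2)) (hb'adjC c hc hne).symm
              have hZP : ∀ b ∈ B, b ≠ b1 → b ∈ clIn G S {c2, z} := by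
                intro b hb hne
                rcases eq_or_ne b b' with rfl | hbb'
                · exact hb'P
                rcases eq_or_ne b z with rfl | hbz
                · exact hzP
                have hbdC : dd G C b = 0 := hrest0 b hb hne hbb'
                exact two_mem hsubP (hBS hb) hzP hb'P hzb'
                  (hstarZ b hb hbdC z hzB (Ne.symm hbz))
                  (hstarZ b hb hbdC b' hb'B (Ne.symm hbb'))
              have hb1P : b1 ∈ clIn G S {c2, z} := by
                obtain ⟨t1, ht1, t2, ht2, ht12⟩ := one_lt_card.1
                  (show 1 < (G.neighborFinset b1 ∩ B).card by
                    have : (G.neighborFinset b1 ∩ B).card = dd G B b1 := rfl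
                    omega)
                have hadj1 : G.Adj b1 t1 := (G.mem_neighborFinset b1 t1).1 (mem_inter.1 ht1).1
                have hadj2 : G.Adj b1 t2 := (G.mem_neighborFinset b1 t2).1 (mem_inter.1 ht2).1
                exact two_mem hsubP (hBS hb1B)
                  (hZP t1 (mem_inter.1 ht1).2 hadj1.ne') (hZP t2 (mem_inter.1 ht2).2 hadj2.ne')
                  ht12 hadj1 hadj2
              have hc1P : c1 ∈ clIn G S {c2, z} :=
                two_mem hsubP (hCS hc1C) hb1P hc2P (fun h => hdisj hb1B (h ▸ hc2C))
                  hadjc1b1 (hclique c1 hc1C c2 hc2C (Ne.symm hc12))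
              apply Subset.antisymm (clIn_subset hsubP)
              intro s hsS
              by_cases hsB : s ∈ B
              · rcases eq_or_ne s b1 with rfl | hne
                · exact hb1P
                · exact hZP s hsB hne
              · have hsC : s ∈ C := mem_sdiff.2 ⟨hsS, hsB⟩
                rcases eq_or_ne s c1 with rfl | hne
                · exact hc1P
                · exact hCP s hsC hne
            · -- |C| = 2 : the graph is C5, contradiction
              exfalso
              have hk2e : C.card = 2 := by omega
              have hm3e : B.card = 3 := by omega
              have hN5 : N = 5 := by omega
              have hb0b' : b0 ≠ b' := fun h => hb'F (h ▸ hb0F)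
              have hBeq : B = {b1, b', b0} := by
                refine (eq_of_subset_of_card_le ?_ ?_).symm
                · intro t ht
                  rcases mem_insert.1 ht with rfl | ht
                  · exact hb1B
                  rcases mem_insert.1 ht with rfl | ht
                  · exact hb'B
                  · rw [mem_singleton.1 ht]; exact hb0B
                · rw [card_eq_three.2 ⟨b1, b', b0, hb1b', Ne.symm hb0b1, Ne.symm hb0b', rfl⟩]
                  omega
              have hCeq : C = {c1, c2} := by
                refine (eq_of_subset_of_card_le ?_ ?_).symm
                · intro t ht
                  rcases mem_insert.1 ht with rfl | ht
                  · exact hc1C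
                  · rw [mem_singleton.1 ht]; exact hc2C
                · rw [card_pair hc12]
                  omega
              have hA1 : G.Adj b0 b1 := hstarZ b0 hb0B hb0dC b1 hb1B (Ne.symm hb0b1)
              have hA2 : G.Adj b0 b' := hstarZ b0 hb0B hb0dC b' hb'B (Ne.symm hb0b')
              have hNadj1 : ¬ G.Adj b1 b' := fun h => hnadjb1b' h.symm
              have hd_b1B : G.neighborFinset b1 ∩ B = {b0} := by
                rw [hBeq]
                ext z
                simp only [mem_inter, mem_insert, mem_singleton,
                  SimpleGraph.mem_neighborFinset]
                constructor
                · rintro ⟨hadj, (rfl | rfl | rfl)⟩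
                  · exact (G.irrefl hadj).elim
                  · exact (hNadj1 hadj).elim
                  · rfl
                · rintro rfl
                  exact ⟨hA1.symm, Or.inr (Or.inr rfl)⟩
              have hd_b'B : G.neighborFinset b' ∩ B = {b0} := by
                rw [hBeq]
                ext z
                simp only [mem_inter, mem_insert, mem_singleton,
                  SimpleGraph.mem_neighborFinset]
                constructor
                · rintro ⟨hadj, (rfl | rfl | rfl)⟩
                  · exact (hnadjb1b' hadj).elim
                  · exact (G.irrefl hadj).elim
                  · rfl
                · rintro rfl
                  exact ⟨hA2.symm, Or.inr (Or.inr rfl)⟩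
              have hd_b0B : G.neighborFinset b0 ∩ B = {b1, b'} := by
                rw [hBeq]
                ext z
                simp only [mem_inter, mem_insert, mem_singleton,
                  SimpleGraph.mem_neighborFinset]
                constructor
                · rintro ⟨hadj, (rfl | rfl | rfl)⟩
                  · exact Or.inl rfl
                  · exact Or.inr rfl
                  · exact (G.irrefl hadj).elim
                · rintro (rfl | rfl)
                  · exact ⟨hA1, Or.inl rfl⟩
                  · exact ⟨hA2, Or.inr (Or.inl rfl)⟩
              apply hC5
              refine ⟨hN5, ?_⟩
              intro v hvS
              rw [hBCsplit v]
              by_cases hvB : v ∈ B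
              · rw [hBeq] at hvB
                rcases mem_insert.1 hvB with rfl | hvB
                · have e1 : dd G B v = 1 := by rw [dd, hd_b1B, card_singleton]
                  have e2 : dd G C v = 1 := by rw [dd, hnbrb1C, card_singleton]
                  omega
                rcases mem_insert.1 hvB with rfl | hvB
                · have e1 : dd G B v = 1 := by rw [dd, hd_b'B, card_singleton]
                  have e2 : dd G C v = 1 := by
                    rw [dd, hnbrb'C, card_erase_of_mem hc1C]
                    omega
                  omega
                · rw [mem_singleton.1 hvB]
                  have e1 : dd G B b0 = 2 := by rw [dd, hd_b0B, card_pair hb1b']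
                  omega
              · have hvC : v ∈ C := mem_sdiff.2 ⟨hvS, hvB⟩
                have e1 := (hB1 v hvC).1
                have e2 := (hB1 v hvC).2
                omega
          · -- at least two vertices of B not activated : contradiction
            exfalso
            obtain ⟨t1, ht1, t2, ht2, ht12⟩ := one_lt_card.1 hw2
            have hdc1 := (hWbound t1 (mem_sdiff.1 ht1).1 (mem_sdiff.1 ht1).2).2
            have hdc2 := (hWbound t2 (mem_sdiff.1 ht2).1 (mem_sdiff.1 ht2).2).2
            have hpairsum : dd G C t1 + dd G C t2 ≤ ∑ b ∈ B \ F, dd G C b := by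
              have hsubp : ({t1, t2} : Finset V) ⊆ B \ F := by
                intro t ht; rcases mem_insert.1 ht with rfl | ht
                · exact ht1
                · rw [mem_singleton.1 ht]; exact ht2
              calc dd G C t1 + dd G C t2
                  = ∑ b ∈ ({t1, t2} : Finset V), dd G C b := (sum_pair ht12).symm
                _ ≤ _ := Finset.sum_le_sum_of_subset hsubp
            -- b1 is nonadjacent to all of B \ F
            have hWnonadj : B \ F ⊆ B.erase b1 \ G.neighborFinset b1 := by
              intro b hb
              rcases mem_sdiff.1 hb with ⟨hbB, hbF⟩
              refine mem_sdiff.2 ⟨mem_erase.2 ⟨fun h => hbF (h ▸ hb1F), hbB⟩, ?_⟩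
              intro hmem
              exact hnonadjb1 b hbB hbF ((G.mem_neighborFinset b1 b).1 hmem).symm
            have hq1 : (B \ F).card ≤ (B.erase b1 \ G.neighborFinset b1).card :=
              card_le_card hWnonadj
            have hq2 : (B.erase b1 \ G.neighborFinset b1).card
                + (B.erase b1 ∩ G.neighborFinset b1).card = (B.erase b1).card :=
              card_sdiff_add_card_inter _ _
            have hq3 : B.erase b1 ∩ G.neighborFinset b1 = G.neighborFinset b1 ∩ B := by
              ext z
              simp only [mem_inter, mem_erase]
              constructor
              · rintro ⟨⟨_, h3⟩, h4⟩; exact ⟨h4, h3⟩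
              · rintro ⟨h4, h3⟩
                exact ⟨⟨fun he => G.irrefl (he ▸ (G.mem_neighborFinset b1 z).1 h4), h3⟩, h4⟩
            rw [hq3] at hq2
            have hq4 := card_erase_of_mem hb1B
            have hq5 : (G.neighborFinset b1 ∩ B).card = dd G B b1 := rfl
            have hq6 := hdSbB2 b1 hb1B
            have hq7 := hBCsplit b1
            omega

section C5
variable {V : Type*} [Fintype V] {G : SimpleGraph V}

lemma other_nbr (hdeg2 : ∀ v : V, (G.neighborFinset v).card = 2) {v y : V} (h : G.Adj v y) :
    ∃ z, G.Adj v z ∧ z ≠ y ∧ G.neighborFinset v = {y, z} := by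
  obtain ⟨a, b, hab, heq⟩ := card_eq_two.1 (hdeg2 v)
  have hy : y ∈ G.neighborFinset v := (G.mem_neighborFinset v y).2 h
  rw [heq] at hy
  rcases mem_insert.1 hy with rfl | hy
  · exact ⟨b, (G.mem_neighborFinset v b).1 (by rw [heq]; exact mem_insert_of_mem (mem_singleton_self _)),
      Ne.symm hab, heq⟩
  · refine ⟨a, (G.mem_neighborFinset v a).1 (by rw [heq]; exact mem_insert_self _ _), ?_, ?_⟩
    · rw [mem_singleton.1 hy]; exact hab
    · rw [mem_singleton.1 hy, heq]; exact pair_comm a b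

lemma closed_small (hcard : Fintype.card V = 5)
    (hdeg2 : ∀ v : V, (G.neighborFinset v).card = 2)
    (T : Finset V) (hT3 : 3 ≤ T.card) (hT4 : T.card ≤ 4)
    (hcl : ∀ t ∈ T, G.neighborFinset t ⊆ T) : False := by
  obtain ⟨e, he⟩ : (univ \ T).Nonempty := by
    apply card_pos.1
    rw [card_sdiff_of_subset (subset_univ T), card_univ, hcard]
    omega
  have heT : e ∉ T := (mem_sdiff.1 he).2
  have hsub : G.neighborFinset e ⊆ univ \ insert e T := by
    intro z hz
    have hadj : G.Adj e z := (G.mem_neighborFinset e z).1 hz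
    refine mem_sdiff.2 ⟨mem_univ _, ?_⟩
    intro hmem
    rcases mem_insert.1 hmem with rfl | hzT
    · exact G.irrefl hadj
    · exact heT (hcl z hzT ((G.mem_neighborFinset z e).2 hadj.symm))
  have h1 := card_le_card hsub
  rw [hdeg2 e, card_sdiff_of_subset (subset_univ _), card_univ, hcard,
    card_insert_of_notMem heT] at h1
  omega

lemma c5_iso (hcard : Fintype.card V = 5) (hreg : ∀ v : V, G.degree v = 2) :
    Nonempty (G ≃g SimpleGraph.cycleGraph 5) := by
  have hdeg2 : ∀ v : V, (G.neighborFinset v).card = 2 := hreg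
  obtain ⟨v0⟩ : Nonempty V := Fintype.card_pos_iff.1 (by omega)
  obtain ⟨a, b, hab, hN0⟩ := card_eq_two.1 (hdeg2 v0)
  have hv0a : G.Adj v0 a := (G.mem_neighborFinset v0 a).1 (by rw [hN0]; exact mem_insert_self _ _)
  have hv0b : G.Adj v0 b := (G.mem_neighborFinset v0 b).1
    (by rw [hN0]; exact mem_insert_of_mem (mem_singleton_self _))
  have hnab : ¬ G.Adj a b := by
    intro h
    have hNa : G.neighborFinset a = {v0, b} := by
      refine (eq_of_subset_of_card_le ?_ ?_).symm
      · intro t ht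
        rcases mem_insert.1 ht with rfl | ht
        · exact (G.mem_neighborFinset a t).2 hv0a.symm
        · rw [mem_singleton.1 ht]; exact (G.mem_neighborFinset a b).2 h
      · rw [hdeg2 a, card_pair hv0b.ne]
    have hNb : G.neighborFinset b = {v0, a} := by
      refine (eq_of_subset_of_card_le ?_ ?_).symm
      · intro t ht
        rcases mem_insert.1 ht with rfl | ht
        · exact (G.mem_neighborFinset b t).2 hv0b.symm
        · rw [mem_singleton.1 ht]; exact (G.mem_neighborFinset b a).2 h.symm
      · rw [hdeg2 b, card_pair hv0a.ne]
    refine closed_small hcard hdeg2 {v0, a, b} ?_ ?_ ?_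
    · rw [card_eq_three.2 ⟨v0, a, b, hv0a.ne, hv0b.ne, hab, rfl⟩]
    · rw [card_eq_three.2 ⟨v0, a, b, hv0a.ne, hv0b.ne, hab, rfl⟩]; omega
    · intro t ht
      rcases mem_insert.1 ht with rfl | ht
      · rw [hN0]; intro z hz
        rcases mem_insert.1 hz with rfl | hz
        · exact mem_insert_of_mem (mem_insert_self _ _)
        · rw [mem_singleton.1 hz]
          exact mem_insert_of_mem (mem_insert_of_mem (mem_singleton_self _))
      rcases mem_insert.1 ht with rfl | ht
      · rw [hNa]; intro z hz
        rcases mem_insert.1 hz with rfl | hz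
        · exact mem_insert_self _ _
        · rw [mem_singleton.1 hz]
          exact mem_insert_of_mem (mem_insert_of_mem (mem_singleton_self _))
      · rw [mem_singleton.1 ht, hNb]; intro z hz
        rcases mem_insert.1 hz with rfl | hz
        · exact mem_insert_self _ _
        · rw [mem_singleton.1 hz]
          exact mem_insert_of_mem (mem_insert_self _ _)
  obtain ⟨c, hac, hcv0, hNa⟩ := other_nbr hdeg2 hv0a.symm
  obtain ⟨d, hbd, hdv0, hNb⟩ := other_nbr hdeg2 hv0b.symm
  have hca : c ≠ a := hac.ne'
  have hcb : c ≠ b := fun h => hnab (h ▸ hac)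
  have hda : d ≠ a := fun h => (hnab (h ▸ hbd).symm)
  have hdb : d ≠ b := hbd.ne'
  have hcd : c ≠ d := by
    rintro rfl
    have hNc : G.neighborFinset c = {a, b} := by
      refine (eq_of_subset_of_card_le ?_ ?_).symm
      · intro t ht
        rcases mem_insert.1 ht with rfl | ht
        · exact (G.mem_neighborFinset c t).2 hac.symm
        · rw [mem_singleton.1 ht]; exact (G.mem_neighborFinset c b).2 hbd.symm
      · rw [hdeg2 c, card_pair hab]
    have hc4 : ({v0, a, b, c} : Finset V).card = 4 := by
      rw [card_insert_of_notMem, card_eq_three.2 ⟨a, b, c, hab, Ne.symm hca, Ne.symm hcb, rfl⟩]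
      simp only [mem_insert, mem_singleton]
      push_neg
      exact ⟨hv0a.ne, hv0b.ne, Ne.symm hcv0⟩
    refine closed_small hcard hdeg2 {v0, a, b, c} (by omega) (by omega) ?_
    intro t ht
    have hsub : ∀ u w : V, u ∈ ({v0,a,b,c} : Finset V) → w ∈ ({v0,a,b,c} : Finset V) →
        ({u, w} : Finset V) ⊆ {v0, a, b, c} := by
      intro u w hu hw z hz
      rcases mem_insert.1 hz with rfl | hz
      · exact hu
      · rw [mem_singleton.1 hz]; exact hw
    have hv0m : v0 ∈ ({v0,a,b,c} : Finset V) := mem_insert_self _ _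
    have ham : a ∈ ({v0,a,b,c} : Finset V) := mem_insert_of_mem (mem_insert_self _ _)
    have hbm : b ∈ ({v0,a,b,c} : Finset V) :=
      mem_insert_of_mem (mem_insert_of_mem (mem_insert_self _ _))
    have hcm : c ∈ ({v0,a,b,c} : Finset V) :=
      mem_insert_of_mem (mem_insert_of_mem (mem_insert_of_mem (mem_singleton_self _)))
    rcases mem_insert.1 ht with rfl | ht
    · rw [hN0]; exact hsub _ _ ham hbm
    rcases mem_insert.1 ht with rfl | ht
    · rw [hNa]; exact hsub _ _ hv0m hcm
    rcases mem_insert.1 ht with rfl | ht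
    · rw [hNb]; exact hsub _ _ hv0m hcm
    · rw [mem_singleton.1 ht, hNc]; exact hsub _ _ ham hbm
  -- the whole vertex set
  have hset5 : ({v0, a, c, d, b} : Finset V).card = 5 := by
    have e1 : ({d, b} : Finset V).card = 2 := card_pair hdb
    have e2 : ({c, d, b} : Finset V).card = 3 := by
      rw [card_insert_of_notMem, e1]
      simp only [mem_insert, mem_singleton]
      push_neg
      exact ⟨hcd, hcb⟩
    have e3 : ({a, c, d, b} : Finset V).card = 4 := by
      rw [card_insert_of_notMem, e2]
      simp only [mem_insert, mem_singleton]
      push_neg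
      exact ⟨Ne.symm hca, Ne.symm hda, hab⟩
    rw [card_insert_of_notMem, e3]
    simp only [mem_insert, mem_singleton]
    push_neg
    exact ⟨hv0a.ne, Ne.symm hcv0, Ne.symm hdv0, hv0b.ne⟩
  have huniveq : (univ : Finset V) = {v0, a, c, d, b} :=
    (eq_of_subset_of_card_le (subset_univ _) (by rw [hset5, card_univ, hcard])).symm
  have hallmem : ∀ z : V, z = v0 ∨ z = a ∨ z = c ∨ z = d ∨ z = b := by
    intro z
    have : z ∈ ({v0, a, c, d, b} : Finset V) := huniveq ▸ mem_univ z
    simpa only [mem_insert, mem_singleton] using this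
  -- c's second neighbour is d
  obtain ⟨z, hcz, hzna, hNc⟩ := other_nbr hdeg2 hac.symm
  have hzd : z = d := by
    rcases hallmem z with rfl | rfl | rfl | rfl | rfl
    · exfalso
      have : c ∈ G.neighborFinset z := (G.mem_neighborFinset z c).2 hcz.symm
      rw [hN0] at this
      rcases mem_insert.1 this with h | h
      · exact hca h
      · exact hcb (mem_singleton.1 h)
    · exact absurd rfl hzna
    · exact absurd hcz (G.irrefl)
    · rfl
    · exfalso
      have : c ∈ G.neighborFinset z := (G.mem_neighborFinset z c).2 hcz.symm
      rw [hNb] at this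
      rcases mem_insert.1 this with h | h
      · exact hcv0 h
      · exact hcd (mem_singleton.1 h)
  rw [hzd] at hcz hNc
  have hNd : G.neighborFinset d = {b, c} := by
    refine (eq_of_subset_of_card_le ?_ ?_).symm
    · intro t ht
      rcases mem_insert.1 ht with rfl | ht
      · exact (G.mem_neighborFinset d t).2 hbd.symm
      · rw [mem_singleton.1 ht]; exact (G.mem_neighborFinset d c).2 hcz.symm
    · rw [hdeg2 d, card_pair (Ne.symm hcb)]
  -- build the isomorphism
  have hfinj : Function.Injective (![v0, a, c, d, b] : Fin 5 → V) := by
    intro i j hij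
    fin_cases i <;> fin_cases j <;>
      simp_all [hv0a.ne, hv0b.ne, hca, hcb, hcd, hda, hdb, hcv0, hdv0, hab, hac.ne, hbd.ne]
  have hfbij : Function.Bijective (![v0, a, c, d, b] : Fin 5 → V) :=
    (Fintype.bijective_iff_injective_and_card _).2 ⟨hfinj, by rw [Fintype.card_fin, hcard]⟩
  set e : Fin 5 ≃ V := Equiv.ofBijective _ hfbij with hedef
  have hadj_iff : ∀ i j : Fin 5,
      G.Adj ((![v0, a, c, d, b] : Fin 5 → V) i) ((![v0, a, c, d, b] : Fin 5 → V) j)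
        ↔ (SimpleGraph.cycleGraph 5).Adj i j := by
    intro i j
    have hmem : ∀ u w : V, G.Adj u w ↔ w ∈ G.neighborFinset u :=
      fun u w => (G.mem_neighborFinset u w).symm
    fin_cases i <;> fin_cases j <;>
      simp [hmem, hN0, hNa, hNb, hNc, hNd, SimpleGraph.cycleGraph_adj,
        hv0a.ne, hv0b.ne, hca, hcb, hcd, hda, hdb, hcv0, hdv0, hab,
        Ne.symm hca, Ne.symm hcb, Ne.symm hcd, Ne.symm hda, Ne.symm hdb,
        Ne.symm hcv0, Ne.symm hdv0, Ne.symm hab, hv0a.ne', hv0b.ne'] <;>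
      decide
  refine ⟨{ toEquiv := e.symm, map_rel_iff' := ?_ }⟩
  intro u w
  have h1 := hadj_iff (e.symm u) (e.symm w)
  have h2 : ∀ t : V, (![v0, a, c, d, b] : Fin 5 → V) (e.symm t) = t :=
    fun t => e.apply_symm_apply t
  rw [h2 u, h2 w] at h1
  exact h1.symm

end C5

theorem stmt2 {V : Type*} [Fintype V] (G : SimpleGraph V)
    (hn : 2 ≤ Fintype.card V)
    (hdeg : ∀ x y : V, x ≠ y → ¬ G.Adj x y →
      Fintype.card V - 1 ≤ G.degree x + G.degree y)
    (hC5 : ¬ Nonempty (G ≃g SimpleGraph.cycleGraph 5)) :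
    minContagious G 2 = 2 := by
  have hddeq : ∀ v : V, dd G univ v = G.degree v := fun v => by
    rw [dd, inter_univ]
    rfl
  have hpair : ∃ A : Finset V, A.card = 2 ∧ Percolates G 2 A := by
    have hC5' : ¬ (Fintype.card V = 5 ∧ ∀ x ∈ (univ : Finset V), dd G univ x = 2) := by
      rintro ⟨h5, hreg⟩
      refine hC5 (c5_iso h5 fun v => ?_)
      have := hreg v (mem_univ v)
      rwa [hddeq] at this
    have hOre : ∀ x ∈ (univ : Finset V), ∀ y ∈ (univ : Finset V), x ≠ y → ¬ G.Adj x y →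
        Fintype.card V ≤ dd G univ x + dd G univ y + 1 := by
      intro x _ y _ hne hnadj
      have := hdeg x y hne hnadj
      rw [hddeq, hddeq]
      omega
    obtain ⟨A, _hAS, hA2, hAcl⟩ := lemmaM G (Fintype.card V) hn univ (by rw [card_univ]) hOre hC5'
    exact ⟨A, hA2, percolates_of_clIn_univ hAcl⟩
  obtain ⟨A, hA2, hAperc⟩ := hpair
  have h2mem : 2 ∈ {k : ℕ | ∃ A : Finset V, A.card = k ∧ Percolates G 2 A} := ⟨A, hA2, hAperc⟩
  have hlow : ∀ j ∈ {k : ℕ | ∃ A : Finset V, A.card = k ∧ Percolates G 2 A}, 2 ≤ j := by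
    rintro j ⟨A', hA'card, t, hA't⟩
    by_contra hj
    push_neg at hj
    have hfixA : bootStep G 2 A' = A' := by
      unfold bootStep
      have hfilter : (Finset.univ.filter fun v => 2 ≤ (G.neighborFinset v ∩ A').card) = ∅ := by
        apply eq_empty_of_forall_notMem
        intro v hv
        have h1 := (mem_filter.1 hv).2
        have h2 : (G.neighborFinset v ∩ A').card ≤ A'.card := card_le_card inter_subset_right
        omega
      rw [hfilter, union_empty]
    have hiter : ∀ s : ℕ, (bootStep G 2)^[s] A' = A' := by
      intro s
      induction s with
      | zero => rfl
      | succ n ih => rw [Function.iterate_succ_apply', ih, hfixA]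
    rw [hiter t] at hA't
    have hcA : A'.card = Fintype.card V := by rw [hA't, card_univ]
    omega
  have hne : {k : ℕ | ∃ A : Finset V, A.card = k ∧ Percolates G 2 A}.Nonempty := ⟨2, h2mem⟩
  have hsmem := Nat.sInf_mem hne
  exact le_antisymm (Nat.sInf_le h2mem) (hlow _ hsmem)
end
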